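/- arXiv:1910.13809 — 6 statements merged into one kernel-verified Lean document; each statement's English description precedes it below -/
import Mathlib

section
/- Let σ be a permutation of [n-1] and let k ∈ [n]. Let π = σ^{(k,1)} be the permutation of [n] obtained by adding 1 to every value of σ and inserting the value 1 at position k. Then crs(π) = crs(σ) + ut_k⁻(σ) − lt_k⁻(σ) + α_k(σ), where crs is the number of crossings, ut_k⁻(σ) = |{i < k : σ⁻¹(i) < i < σ(i)}|, lt_k⁻(σ) = |{i < k : σ(i) < i < σ⁻¹(i)}|, and α_k(σ) = |{i ≥ k : σ(i) < k}|. -/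
open scoped Classical

/-- The number of crossings of a permutation: pairs (i,j) with
i < j < σ(i) < σ(j) or σ(i) < σ(j) ≤ i < j. -/
noncomputable def crs {n : ℕ} (σ : Equiv.Perm (Fin n)) : ℕ :=
  (Finset.univ.filter (fun p : Fin n × Fin n =>
    (p.1 < p.2 ∧ p.2 < σ p.1 ∧ σ p.1 < σ p.2) ∨
    (σ p.1 < σ p.2 ∧ σ p.2 ≤ p.1 ∧ p.1 < p.2))).card

/-- Number of upper transients: i with σ⁻¹(i) < i < σ(i). -/
noncomputable def utCount {n : ℕ} (σ : Equiv.Perm (Fin n)) : ℕ :=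
  (Finset.univ.filter (fun i : Fin n => σ.symm i < i ∧ i < σ i)).card

/-- Number of lower transients: i with σ(i) < i < σ⁻¹(i). -/
noncomputable def ltCount {n : ℕ} (σ : Equiv.Perm (Fin n)) : ℕ :=
  (Finset.univ.filter (fun i : Fin n => σ i < i ∧ i < σ.symm i)).card

/-- σ contains the pattern τ. -/
def Contains {n k : ℕ} (σ : Equiv.Perm (Fin n)) (τ : Fin k → ℕ) : Prop :=
  ∃ f : Fin k → Fin n, StrictMono f ∧ ∀ x y, σ (f x) < σ (f y) ↔ τ x < τ y

/-- σ avoids the pattern τ. -/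
def Avoids {n k : ℕ} (σ : Equiv.Perm (Fin n)) (τ : Fin k → ℕ) : Prop :=
  ¬ Contains σ τ

def p123 : Fin 3 → ℕ := ![1, 2, 3]
def p132 : Fin 3 → ℕ := ![1, 3, 2]
def p213 : Fin 3 → ℕ := ![2, 1, 3]
def p231 : Fin 3 → ℕ := ![2, 3, 1]
def p312 : Fin 3 → ℕ := ![3, 1, 2]
def p321 : Fin 3 → ℕ := ![3, 2, 1]

/-- Generating polynomial of crs over permutations of [n] satisfying P. -/
noncomputable def Fpoly (n : ℕ) (P : Equiv.Perm (Fin n) → Prop) : Polynomial ℤ :=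
  ∑ σ : Equiv.Perm (Fin n), if P σ then Polynomial.X ^ crs σ else 0

def ins (n K : ℕ) (i : Fin (n - 1)) : Fin n :=
  ⟨if (i : ℕ) < K then (i : ℕ) else (i : ℕ) + 1, by
    have := i.isLt; split <;> omega⟩

lemma ins_val (n K : ℕ) (i : Fin (n - 1)) :
    ((ins n K i : Fin n) : ℕ) = if (i : ℕ) < K then (i : ℕ) else (i : ℕ) + 1 := rfl

lemma ins_inj {n K : ℕ} {i j : Fin (n - 1)} (h : ins n K i = ins n K j) : i = j := by
  have h' := congrArg Fin.val h
  simp only [ins_val] at h'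
  have hi := i.isLt; have hj := j.isLt
  apply Fin.ext
  split_ifs at h' <;> omega

lemma ins_ne {n K : ℕ} (hK : K < n) (i : Fin (n - 1)) : ins n K i ≠ ⟨K, hK⟩ := by
  intro h
  have h' := congrArg Fin.val h
  simp only [ins_val] at h'
  split_ifs at h' <;> omega

lemma ins_surj {n K : ℕ} (hK : K < n) (p : Fin n) (hp : p ≠ ⟨K, hK⟩) :
    ∃ i : Fin (n - 1), p = ins n K i := by
  have hv : (p : ℕ) ≠ K := fun h => hp (Fin.ext h)
  rcases lt_or_gt_of_ne hv with h | h
  · refine ⟨⟨(p : ℕ), by omega⟩, ?_⟩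
    apply Fin.ext; rw [ins_val]
    show (p : ℕ) = if (p : ℕ) < K then (p : ℕ) else (p : ℕ) + 1
    simp [h]
  · refine ⟨⟨(p : ℕ) - 1, by have := p.isLt; omega⟩, ?_⟩
    apply Fin.ext; rw [ins_val]
    show (p : ℕ) = if (p : ℕ) - 1 < K then (p : ℕ) - 1 else (p : ℕ) - 1 + 1
    have := p.isLt
    split <;> omega

lemma crs_key (n K : ℕ) (hK : K < n)
    (σ : Equiv.Perm (Fin (n - 1))) (π : Equiv.Perm (Fin n))
    (hval : ∀ i : Fin (n - 1), (π (ins n K i) : ℕ) = (σ i : ℕ) + 1)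
    (hzero : (π ⟨K, hK⟩ : ℕ) = 0) :
    crs π + (Finset.univ.filter (fun i : Fin (n - 1) =>
        (i : ℕ) < K ∧ σ i < i ∧ i < σ.symm i)).card
    = crs σ
      + (Finset.univ.filter (fun i : Fin (n - 1) =>
          (i : ℕ) < K ∧ σ.symm i < i ∧ i < σ i)).card
      + (Finset.univ.filter (fun i : Fin (n - 1) =>
          K ≤ (i : ℕ) ∧ (σ i : ℕ) < K)).card := by
  -- second coordinate of a crossing of π is never the position of the value 0
  have hP2 : ∀ p : Fin n × Fin n,
      ((p.1 < p.2 ∧ p.2 < π p.1 ∧ π p.1 < π p.2) ∨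
        (π p.1 < π p.2 ∧ π p.2 ≤ p.1 ∧ p.1 < p.2)) → p.2 ≠ ⟨K, hK⟩ := by
    intro p hp hq
    have h12 : π p.1 < π p.2 := by rcases hp with ⟨_, _, h⟩ | ⟨h, _, _⟩ <;> exact h
    rw [hq] at h12
    have h13 := Fin.lt_def.mp h12
    omega
  -- split the crossing set of π
  have hcrsπ : crs π =
      (Finset.univ.filter (fun p : Fin n × Fin n =>
        ((p.1 < p.2 ∧ p.2 < π p.1 ∧ π p.1 < π p.2) ∨
         (π p.1 < π p.2 ∧ π p.2 ≤ p.1 ∧ p.1 < p.2)) ∧ p.1 ≠ ⟨K, hK⟩ ∧ p.2 ≠ ⟨K, hK⟩)).card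
      + (Finset.univ.filter (fun p : Fin n × Fin n =>
        ((p.1 < p.2 ∧ p.2 < π p.1 ∧ π p.1 < π p.2) ∨
         (π p.1 < π p.2 ∧ π p.2 ≤ p.1 ∧ p.1 < p.2)) ∧ p.1 = ⟨K, hK⟩)).card := by
    unfold crs
    rw [show (Finset.univ.filter (fun p : Fin n × Fin n =>
        (p.1 < p.2 ∧ p.2 < π p.1 ∧ π p.1 < π p.2) ∨
        (π p.1 < π p.2 ∧ π p.2 ≤ p.1 ∧ p.1 < p.2)))
      = (Finset.univ.filter (fun p : Fin n × Fin n =>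
          ((p.1 < p.2 ∧ p.2 < π p.1 ∧ π p.1 < π p.2) ∨
           (π p.1 < π p.2 ∧ π p.2 ≤ p.1 ∧ p.1 < p.2)) ∧ p.1 ≠ ⟨K, hK⟩ ∧ p.2 ≠ ⟨K, hK⟩))
        ∪ (Finset.univ.filter (fun p : Fin n × Fin n =>
          ((p.1 < p.2 ∧ p.2 < π p.1 ∧ π p.1 < π p.2) ∨
           (π p.1 < π p.2 ∧ π p.2 ≤ p.1 ∧ p.1 < p.2)) ∧ p.1 = ⟨K, hK⟩)) from by
      ext p
      simp only [Finset.mem_filter, Finset.mem_union, Finset.mem_univ, true_and]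
      constructor
      · intro hp
        by_cases h : p.1 = ⟨K, hK⟩
        · exact Or.inr ⟨hp, h⟩
        · exact Or.inl ⟨hp, h, hP2 p hp⟩
      · rintro (⟨hp, _⟩ | ⟨hp, _⟩) <;> exact hp]
    apply Finset.card_union_of_disjoint
    rw [Finset.disjoint_left]
    intro p hp hq
    simp only [Finset.mem_filter] at hp hq
    exact hp.2.2.1 hq.2.2
  -- the part with p.1 = position of value 0 counts α
  have hB : (Finset.univ.filter (fun p : Fin n × Fin n =>
        ((p.1 < p.2 ∧ p.2 < π p.1 ∧ π p.1 < π p.2) ∨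
         (π p.1 < π p.2 ∧ π p.2 ≤ p.1 ∧ p.1 < p.2)) ∧ p.1 = ⟨K, hK⟩)).card
      = (Finset.univ.filter (fun i : Fin (n - 1) =>
          K ≤ (i : ℕ) ∧ (σ i : ℕ) < K)).card := by
    symm
    apply Finset.card_bij (fun i _ => ((⟨K, hK⟩ : Fin n), ins n K i))
    · intro i hi
      simp only [Finset.mem_filter, Finset.mem_univ, true_and] at hi ⊢
      refine ⟨Or.inr ⟨?_, ?_, ?_⟩, trivial⟩
      · show π ⟨K, hK⟩ < π (ins n K i)
        rw [Fin.lt_def, hzero, hval]; omega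
      · show π (ins n K i) ≤ (⟨K, hK⟩ : Fin n)
        rw [Fin.le_def, hval]
        show (σ i : ℕ) + 1 ≤ K
        omega
      · show (⟨K, hK⟩ : Fin n) < ins n K i
        rw [Fin.lt_def, ins_val]
        show K < if (i : ℕ) < K then (i : ℕ) else (i : ℕ) + 1
        split <;> omega
    · intro a _ b _ h
      exact ins_inj (congrArg Prod.snd h)
    · intro p hp
      simp only [Finset.mem_filter, Finset.mem_univ, true_and] at hp
      obtain ⟨hPp, h1⟩ := hp
      obtain ⟨j, hj⟩ := ins_surj hK p.2 (hP2 p hPp)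
      rw [h1, hj] at hPp
      refine ⟨j, ?_, ?_⟩
      · simp only [Finset.mem_filter, Finset.mem_univ, true_and]
        rcases hPp with ⟨_, h2, _⟩ | ⟨_, h2, h3⟩
        · have := Fin.lt_def.mp h2
          rw [hzero] at this
          omega
        · have ha := Fin.le_def.mp h2
          rw [hval] at ha
          have hb := Fin.lt_def.mp h3
          rw [ins_val] at hb
          have hb' : K < if (j : ℕ) < K then (j : ℕ) else (j : ℕ) + 1 := hb
          have ha' : (σ j : ℕ) + 1 ≤ K := ha
          constructor
          · split at hb' <;> omega
          · omega
      · rw [← hj, ← h1]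
  -- the part avoiding the new position is in bijection with pairs of old positions
  have hA : (Finset.univ.filter (fun p : Fin n × Fin n =>
        ((p.1 < p.2 ∧ p.2 < π p.1 ∧ π p.1 < π p.2) ∨
         (π p.1 < π p.2 ∧ π p.2 ≤ p.1 ∧ p.1 < p.2)) ∧ p.1 ≠ ⟨K, hK⟩ ∧ p.2 ≠ ⟨K, hK⟩)).card
      = (Finset.univ.filter (fun q : Fin (n - 1) × Fin (n - 1) =>
          (ins n K q.1 < ins n K q.2 ∧ ins n K q.2 < π (ins n K q.1) ∧
            π (ins n K q.1) < π (ins n K q.2)) ∨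
          (π (ins n K q.1) < π (ins n K q.2) ∧ π (ins n K q.2) ≤ ins n K q.1 ∧
            ins n K q.1 < ins n K q.2))).card := by
    symm
    apply Finset.card_bij (fun q _ => (ins n K q.1, ins n K q.2))
    · intro q hq
      simp only [Finset.mem_filter, Finset.mem_univ, true_and] at hq ⊢
      exact ⟨hq, ins_ne hK q.1, ins_ne hK q.2⟩
    · intro a _ b _ h
      have h1 := congrArg Prod.fst h
      have h2 := congrArg Prod.snd h
      exact Prod.ext (ins_inj h1) (ins_inj h2)
    · intro p hp
      simp only [Finset.mem_filter, Finset.mem_univ, true_and] at hp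
      obtain ⟨hPp, h1, h2⟩ := hp
      obtain ⟨i, hi⟩ := ins_surj hK p.1 h1
      obtain ⟨j, hj⟩ := ins_surj hK p.2 h2
      refine ⟨(i, j), ?_, ?_⟩
      · simp only [Finset.mem_filter, Finset.mem_univ, true_and]
        show ((ins n K i < ins n K j ∧ ins n K j < π (ins n K i) ∧
            π (ins n K i) < π (ins n K j)) ∨
          (π (ins n K i) < π (ins n K j) ∧ π (ins n K j) ≤ ins n K i ∧
            ins n K i < ins n K j))
        rw [← hi, ← hj]
        exact hPp
      · show (ins n K i, ins n K j) = p
        rw [← hi, ← hj]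
  -- the main combinatorial identity over pairs of old positions
  have hkey : (Finset.univ.filter (fun q : Fin (n - 1) × Fin (n - 1) =>
          (ins n K q.1 < ins n K q.2 ∧ ins n K q.2 < π (ins n K q.1) ∧
            π (ins n K q.1) < π (ins n K q.2)) ∨
          (π (ins n K q.1) < π (ins n K q.2) ∧ π (ins n K q.2) ≤ ins n K q.1 ∧
            ins n K q.1 < ins n K q.2))).card
      + (Finset.univ.filter (fun q : Fin (n - 1) × Fin (n - 1) =>
          (q.1 : ℕ) < K ∧ σ q.1 < q.1 ∧ q.1 < q.2 ∧ σ q.2 = q.1)).card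
      = (Finset.univ.filter (fun q : Fin (n - 1) × Fin (n - 1) =>
          (q.1 < q.2 ∧ q.2 < σ q.1 ∧ σ q.1 < σ q.2) ∨
          (σ q.1 < σ q.2 ∧ σ q.2 ≤ q.1 ∧ q.1 < q.2))).card
      + (Finset.univ.filter (fun q : Fin (n - 1) × Fin (n - 1) =>
          (q.2 : ℕ) < K ∧ q.2 < σ q.2 ∧ q.1 < q.2 ∧ σ q.1 = q.2)).card := by
    rw [← Finset.card_union_of_disjoint (by
        rw [Finset.disjoint_left]
        rintro ⟨i, j⟩ hq hq'
        simp only [Finset.mem_filter, Finset.mem_univ, true_and, Fin.lt_def, Fin.le_def,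
          hval, ins_val, Fin.ext_iff] at hq hq'
        split_ifs at hq <;> omega),
      ← Finset.card_union_of_disjoint (by
        rw [Finset.disjoint_left]
        rintro ⟨i, j⟩ hq hq'
        simp only [Finset.mem_filter, Finset.mem_univ, true_and, Fin.lt_def, Fin.le_def,
          Fin.ext_iff] at hq hq'
        omega)]
    congr 1
    ext ⟨i, j⟩
    simp only [Finset.mem_union, Finset.mem_filter, Finset.mem_univ, true_and, Fin.lt_def,
      Fin.le_def, hval, ins_val, Fin.ext_iff]
    split_ifs <;> omega
  -- the "lower" exceptional pairs count the lower transients below K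
  have hL : (Finset.univ.filter (fun q : Fin (n - 1) × Fin (n - 1) =>
          (q.1 : ℕ) < K ∧ σ q.1 < q.1 ∧ q.1 < q.2 ∧ σ q.2 = q.1)).card
      = (Finset.univ.filter (fun i : Fin (n - 1) =>
          (i : ℕ) < K ∧ σ i < i ∧ i < σ.symm i)).card := by
    apply Finset.card_bij (fun q _ => q.1)
    · intro q hq
      simp only [Finset.mem_filter, Finset.mem_univ, true_and] at hq ⊢
      obtain ⟨ha, hb, hc, hd⟩ := hq
      have he : σ.symm q.1 = q.2 := by rw [← hd]; exact σ.symm_apply_apply q.2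
      exact ⟨ha, hb, by rw [he]; exact hc⟩
    · intro a ha b hb h
      simp only [Finset.mem_filter, Finset.mem_univ, true_and] at ha hb
      have h2 : a.2 = b.2 := by
        have := ha.2.2.2.trans (h.trans hb.2.2.2.symm)
        exact σ.injective this
      exact Prod.ext h h2
    · intro i hi
      simp only [Finset.mem_filter, Finset.mem_univ, true_and] at hi
      refine ⟨(i, σ.symm i), ?_, rfl⟩
      simp only [Finset.mem_filter, Finset.mem_univ, true_and]
      exact ⟨hi.1, hi.2.1, hi.2.2, σ.apply_symm_apply i⟩
  -- the "upper" exceptional pairs count the upper transients below K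
  have hU : (Finset.univ.filter (fun q : Fin (n - 1) × Fin (n - 1) =>
          (q.2 : ℕ) < K ∧ q.2 < σ q.2 ∧ q.1 < q.2 ∧ σ q.1 = q.2)).card
      = (Finset.univ.filter (fun i : Fin (n - 1) =>
          (i : ℕ) < K ∧ σ.symm i < i ∧ i < σ i)).card := by
    apply Finset.card_bij (fun q _ => q.2)
    · intro q hq
      simp only [Finset.mem_filter, Finset.mem_univ, true_and] at hq ⊢
      obtain ⟨ha, hb, hc, hd⟩ := hq
      have he : σ.symm q.2 = q.1 := by rw [← hd]; exact σ.symm_apply_apply q.1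
      exact ⟨ha, by rw [he]; exact hc, hb⟩
    · intro a ha b hb h
      simp only [Finset.mem_filter, Finset.mem_univ, true_and] at ha hb
      have h1 : a.1 = b.1 := σ.injective (by rw [ha.2.2.2, hb.2.2.2]; exact h)
      exact Prod.ext h1 h
    · intro i hi
      simp only [Finset.mem_filter, Finset.mem_univ, true_and] at hi
      refine ⟨(σ.symm i, i), ?_, rfl⟩
      simp only [Finset.mem_filter, Finset.mem_univ, true_and]
      exact ⟨hi.1, hi.2.2, hi.2.1, σ.apply_symm_apply i⟩
  have hC : crs σ = (Finset.univ.filter (fun q : Fin (n - 1) × Fin (n - 1) =>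
      (q.1 < q.2 ∧ q.2 < σ q.1 ∧ σ q.1 < σ q.2) ∨
      (σ q.1 < σ q.2 ∧ σ q.2 ≤ q.1 ∧ q.1 < q.2))).card := rfl
  omega

theorem crs_insert (n k : ℕ) (hn : 1 ≤ n) (hk : 1 ≤ k) (hkn : k ≤ n)
    (σ : Equiv.Perm (Fin (n - 1))) (π : Equiv.Perm (Fin n))
    (h1 : ∀ (i : ℕ) (hik : i < k - 1),
      (π ⟨i, by omega⟩ : ℕ) = (σ ⟨i, by omega⟩ : ℕ) + 1)
    (h2 : (π ⟨k - 1, by omega⟩ : ℕ) = 0)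
    (h3 : ∀ (i : ℕ) (hik : k - 1 ≤ i) (hin : i < n - 1),
      (π ⟨i + 1, by omega⟩ : ℕ) = (σ ⟨i, by omega⟩ : ℕ) + 1) :
    (crs π : ℤ) = (crs σ : ℤ)
      + ((Finset.univ.filter (fun i : Fin (n - 1) =>
          (i : ℕ) < k - 1 ∧ σ.symm i < i ∧ i < σ i)).card : ℤ)
      - ((Finset.univ.filter (fun i : Fin (n - 1) =>
          (i : ℕ) < k - 1 ∧ σ i < i ∧ i < σ.symm i)).card : ℤ)
      + ((Finset.univ.filter (fun i : Fin (n - 1) =>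
          k - 1 ≤ (i : ℕ) ∧ (σ i : ℕ) < k - 1)).card : ℤ) := by
  have hK : k - 1 < n := by omega
  have hzero : (π ⟨k - 1, hK⟩ : ℕ) = 0 := h2
  have hval : ∀ i : Fin (n - 1), (π (ins n (k - 1) i) : ℕ) = (σ i : ℕ) + 1 := by
    intro i
    by_cases hic : (i : ℕ) < k - 1
    · have e1 : ins n (k - 1) i = ⟨(i : ℕ), by omega⟩ := by
        apply Fin.ext; rw [ins_val]
        show (if (i : ℕ) < k - 1 then (i : ℕ) else (i : ℕ) + 1) = (i : ℕ)
        simp [hic]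
      rw [e1, h1 (i : ℕ) hic, Fin.eta i i.isLt]
    · have hic' : k - 1 ≤ (i : ℕ) := by omega
      have e1 : ins n (k - 1) i = ⟨(i : ℕ) + 1, by have := i.isLt; omega⟩ := by
        apply Fin.ext; rw [ins_val]
        show (if (i : ℕ) < k - 1 then (i : ℕ) else (i : ℕ) + 1) = (i : ℕ) + 1
        simp [hic]
      rw [e1, h3 (i : ℕ) hic' i.isLt, Fin.eta i i.isLt]
  have hmain := crs_key n (k - 1) hK σ π hval hzero
  omega
end

section
/- For every permutation σ, if π = σ⁻¹ then crs(π) = crs(σ) + ut(σ) − lt(σ), where ut(σ) is the number of indices i with σ⁻¹(i) < i < σ(i) and lt(σ) is the number of indices i with σ(i) < i < σ⁻¹(i). -/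
open scoped Classical

section aux
variable {n : ℕ} (σ : Equiv.Perm (Fin n))

private noncomputable def US : Finset (Fin n × Fin n) :=
  Finset.univ.filter (fun p => p.1 < p.2 ∧ p.2 < σ p.1 ∧ σ p.1 < σ p.2)
private noncomputable def UW : Finset (Fin n × Fin n) :=
  Finset.univ.filter (fun p => p.1 < p.2 ∧ p.2 ≤ σ p.1 ∧ σ p.1 < σ p.2)
private noncomputable def LS : Finset (Fin n × Fin n) :=
  Finset.univ.filter (fun p => σ p.1 < σ p.2 ∧ σ p.2 < p.1 ∧ p.1 < p.2)
private noncomputable def LW : Finset (Fin n × Fin n) :=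
  Finset.univ.filter (fun p => σ p.1 < σ p.2 ∧ σ p.2 ≤ p.1 ∧ p.1 < p.2)

private lemma crs_eq : crs σ = (US σ).card + (LW σ).card := by
  rw [crs, Finset.filter_or, Finset.card_union_of_disjoint]
  · rfl
  · rw [Finset.disjoint_left]
    rintro p hp hq
    simp only [Finset.mem_filter] at hp hq
    obtain ⟨-, h1, h2, h3⟩ := hp
    obtain ⟨-, h4, h5, h6⟩ := hq
    exact lt_asymm (h1.trans h2) (lt_of_lt_of_le h4 h5)

private lemma crs_symm_eq : crs σ.symm = (LS σ).card + (UW σ).card := by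
  rw [crs_eq]
  congr 1
  · apply Finset.card_equiv (σ.symm.prodCongr σ.symm)
    intro p
    simp [US, LS]
  · apply Finset.card_equiv (σ.symm.prodCongr σ.symm)
    intro p
    simp [LW, UW]

private lemma UW_eq : (UW σ).card = (US σ).card + utCount σ := by
  have h : UW σ = US σ ∪ (Finset.univ.filter
      (fun p : Fin n × Fin n => p.1 < p.2 ∧ p.2 = σ p.1 ∧ σ p.1 < σ p.2)) := by
    rw [US, UW, ← Finset.filter_or]
    apply Finset.filter_congr
    intro p _
    constructor
    · rintro ⟨h1, h2, h3⟩
      rcases lt_or_eq_of_le h2 with h | h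
      · exact Or.inl ⟨h1, h, h3⟩
      · exact Or.inr ⟨h1, h, h3⟩
    · rintro (⟨h1, h2, h3⟩ | ⟨h1, h2, h3⟩)
      exacts [⟨h1, le_of_lt h2, h3⟩, ⟨h1, le_of_eq h2, h3⟩]
  rw [h, Finset.card_union_of_disjoint]
  · congr 1
    rw [utCount]
    apply Finset.card_nbij' (fun p => p.2) (fun i => (σ.symm i, i))
    · intro p hp
      simp only [US, Finset.mem_coe, Finset.mem_filter, Finset.mem_univ, true_and] at hp ⊢
      obtain ⟨h1, h2, h3⟩ := hp
      rw [h2, Equiv.symm_apply_apply]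
      exact ⟨h2 ▸ h1, h2 ▸ h3⟩
    · intro i hi
      simp only [Finset.mem_coe, Finset.mem_filter, Finset.mem_univ, true_and] at hi ⊢
      obtain ⟨h1, h2⟩ := hi
      refine ⟨h1, (Equiv.apply_symm_apply σ i).symm, ?_⟩
      rwa [Equiv.apply_symm_apply]
    · intro p hp
      simp only [Finset.mem_coe, Finset.mem_filter, Finset.mem_univ, true_and] at hp
      obtain ⟨h1, h2, h3⟩ := hp
      ext
      · simp [h2]
      · rfl
    · intro i _; rfl
  · rw [Finset.disjoint_left]
    rintro p hp hq
    simp only [US, Finset.mem_filter] at hp hq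
    exact absurd hq.2.2.1 (ne_of_lt hp.2.2.1)

private lemma LW_eq : (LW σ).card = (LS σ).card + ltCount σ := by
  have h : LW σ = LS σ ∪ (Finset.univ.filter
      (fun p : Fin n × Fin n => σ p.1 < σ p.2 ∧ σ p.2 = p.1 ∧ p.1 < p.2)) := by
    rw [LS, LW, ← Finset.filter_or]
    apply Finset.filter_congr
    intro p _
    constructor
    · rintro ⟨h1, h2, h3⟩
      rcases lt_or_eq_of_le h2 with h | h
      · exact Or.inl ⟨h1, h, h3⟩
      · exact Or.inr ⟨h1, h, h3⟩
    · rintro (⟨h1, h2, h3⟩ | ⟨h1, h2, h3⟩)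
      exacts [⟨h1, le_of_lt h2, h3⟩, ⟨h1, le_of_eq h2, h3⟩]
  rw [h, Finset.card_union_of_disjoint]
  · congr 1
    rw [ltCount]
    apply Finset.card_nbij' (fun p => p.1) (fun i => (i, σ.symm i))
    · intro p hp
      simp only [Finset.mem_coe, Finset.mem_filter, Finset.mem_univ, true_and] at hp ⊢
      obtain ⟨h1, h2, h3⟩ := hp
      constructor
      · rw [← h2] at h3 ⊢; exact h2 ▸ h1
      · rw [← h2, Equiv.symm_apply_apply]; exact h2 ▸ h3
    · intro i hi
      simp only [Finset.mem_coe, Finset.mem_filter, Finset.mem_univ, true_and] at hi ⊢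
      obtain ⟨h1, h2⟩ := hi
      refine ⟨?_, Equiv.apply_symm_apply σ i, h2⟩
      rwa [Equiv.apply_symm_apply]
    · intro p hp
      simp only [Finset.mem_coe, Finset.mem_filter, Finset.mem_univ, true_and] at hp
      obtain ⟨h1, h2, h3⟩ := hp
      ext
      · rfl
      · simp [← h2]
    · intro i _; rfl
  · rw [Finset.disjoint_left]
    rintro p hp hq
    simp only [LS, Finset.mem_filter] at hp hq
    exact absurd hq.2.2.1 (ne_of_lt hp.2.2.1)

end aux

theorem crs_inv (n : ℕ) (σ : Equiv.Perm (Fin n)) :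
    (crs σ.symm : ℤ) = (crs σ : ℤ) + (utCount σ : ℤ) - (ltCount σ : ℤ) := by
  have h1 := crs_eq σ
  have h2 := crs_symm_eq σ
  have h3 := UW_eq σ
  have h4 := LW_eq σ
  omega
end

section
/- For every permutation σ of [n], if π = rc(σ) is the reverse-complement of σ, i.e., π(i) = n+1−σ(n+1−i), then crs(π) = crs(σ) + ut(σ) − lt(σ). -/
open scoped Classical

section AuxRC
open Finset

lemma card_filter_congr' {α : Type*} [Fintype α] (P Q : α → Prop)
    [DecidablePred P] [DecidablePred Q]
    (h : ∀ a, P a ↔ Q a) :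
    (univ.filter P).card = (univ.filter Q).card := by
  have : univ.filter P = univ.filter Q := by
    ext a; simp [h a]
  rw [this]

lemma card_filter_or' {α : Type*} [Fintype α] (P Q : α → Prop)
    [DecidablePred P] [DecidablePred Q] [DecidablePred fun a => P a ∨ Q a]
    (h : ∀ a, ¬(P a ∧ Q a)) :
    (univ.filter fun a => P a ∨ Q a).card
      = (univ.filter P).card + (univ.filter Q).card := by
  have hu : (univ.filter fun a => P a ∨ Q a) = univ.filter P ∪ univ.filter Q := by
    ext a; simp [Finset.mem_filter, Finset.mem_union]
  rw [hu, card_union_of_disjoint]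
  simp only [disjoint_left, mem_filter, mem_univ, true_and]
  exact fun a hP hQ => h a ⟨hP, hQ⟩

lemma card_filter_invol {α : Type*} [Fintype α] (e : α → α)
    (he : ∀ a, e (e a) = a) (P Q : α → Prop)
    [DecidablePred P] [DecidablePred Q]
    (h : ∀ a, P (e a) ↔ Q a) :
    (univ.filter P).card = (univ.filter Q).card := by
  apply Finset.card_bij' (fun a _ => e a) (fun a _ => e a)
  · intro a ha
    simp only [mem_filter, mem_univ, true_and] at ha ⊢
    exact (h (e a)).mp (by rw [he]; exact ha)
  · intro a ha
    simp only [mem_filter, mem_univ, true_and] at ha ⊢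
    exact (h a).mpr ha
  · intro a _; exact he a
  · intro a _; exact he a

end AuxRC

theorem crs_reverse_complement (n : ℕ) (σ π : Equiv.Perm (Fin n))
    (h : ∀ i : Fin n,
      (π i : ℕ) = n - 1 - (σ ⟨n - 1 - (i : ℕ), by have := i.isLt; omega⟩ : ℕ)) :
    (crs π : ℤ) = (crs σ : ℤ) + (utCount σ : ℤ) - (ltCount σ : ℤ) := by
  classical
  open Finset in
  -- Step 0 : π i = (σ i.rev).rev
  have hσA : ∀ (i : Fin n) (p : n - 1 - (i : ℕ) < n),
      (σ ⟨n - 1 - (i : ℕ), p⟩ : ℕ) = (σ i.rev : ℕ) := by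
    intro i p
    have hid : (⟨n - 1 - (i : ℕ), p⟩ : Fin n) = i.rev := by
      apply Fin.ext
      rw [Fin.val_rev]
      show n - 1 - (i : ℕ) = n - ((i : ℕ) + 1)
      have := i.isLt
      omega
    rw [hid]
  have hπ : ∀ i : Fin n, π i = (σ i.rev).rev := by
    intro i
    apply Fin.ext
    rw [h i, hσA i, Fin.val_rev]
    have := (σ i.rev).isLt
    have := i.isLt
    omega
  -- equality pair sets count lt / ut
  have h_lt : (univ.filter fun p : Fin n × Fin n =>
      p.1 < p.2 ∧ σ p.2 = p.1 ∧ σ p.1 < σ p.2).card = ltCount σ := by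
    unfold ltCount
    apply Finset.card_bij' (fun (p : Fin n × Fin n) _ => p.1)
      (fun (i : Fin n) _ => (i, σ.symm i))
    · intro p hp
      simp only [mem_filter, mem_univ, true_and] at hp ⊢
      obtain ⟨h1, h2, h3⟩ := hp
      have hs : σ.symm p.1 = p.2 := by rw [← h2, Equiv.symm_apply_apply]
      rw [h2] at h3
      exact ⟨h3, by rw [hs]; exact h1⟩
    · intro i hi
      simp only [mem_filter, mem_univ, true_and] at hi ⊢
      obtain ⟨h1, h2⟩ := hi
      refine ⟨h2, by simp, ?_⟩
      rw [Equiv.apply_symm_apply]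
      exact h1
    · intro p hp
      simp only [mem_filter, mem_univ, true_and] at hp
      obtain ⟨h1, h2, h3⟩ := hp
      have hs : σ.symm p.1 = p.2 := by rw [← h2, Equiv.symm_apply_apply]
      exact Prod.ext rfl hs
    · intro i hi; rfl
  have h_ut : (univ.filter fun p : Fin n × Fin n =>
      p.1 < p.2 ∧ p.2 = σ p.1 ∧ σ p.1 < σ p.2).card = utCount σ := by
    unfold utCount
    apply Finset.card_bij' (fun (p : Fin n × Fin n) _ => p.2)
      (fun (i : Fin n) _ => (σ.symm i, i))
    · intro p hp
      simp only [mem_filter, mem_univ, true_and] at hp ⊢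
      obtain ⟨h1, h2, h3⟩ := hp
      have hs : σ.symm p.2 = p.1 := by rw [h2, Equiv.symm_apply_apply]
      rw [← h2] at h3
      exact ⟨by rw [hs]; exact h1, h3⟩
    · intro i hi
      simp only [mem_filter, mem_univ, true_and] at hi ⊢
      obtain ⟨h1, h2⟩ := hi
      refine ⟨h1, by simp, ?_⟩
      rw [Equiv.apply_symm_apply]
      exact h2
    · intro p hp
      simp only [mem_filter, mem_univ, true_and] at hp
      obtain ⟨h1, h2, h3⟩ := hp
      have hs : σ.symm p.2 = p.1 := by rw [h2, Equiv.symm_apply_apply]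
      exact Prod.ext hs rfl
    · intro i hi; rfl
  -- decomposition of crs σ
  have hcrsσ : crs σ = (univ.filter (fun p : Fin n × Fin n =>
        p.1 < p.2 ∧ p.2 < σ p.1 ∧ σ p.1 < σ p.2)).card
      + ((univ.filter (fun p : Fin n × Fin n =>
        p.1 < p.2 ∧ σ p.2 < p.1 ∧ σ p.1 < σ p.2)).card
      + ltCount σ) := by
    rw [← h_lt]
    show (univ.filter _).card = _
    refine (card_filter_congr' _
        (fun p : Fin n × Fin n =>
          (p.1 < p.2 ∧ p.2 < σ p.1 ∧ σ p.1 < σ p.2) ∨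
          ((p.1 < p.2 ∧ σ p.2 < p.1 ∧ σ p.1 < σ p.2) ∨
           (p.1 < p.2 ∧ σ p.2 = p.1 ∧ σ p.1 < σ p.2)))
        ?_).trans ?_
    · intro p; simp only [Fin.lt_def, Fin.le_def, Fin.ext_iff]; omega
    refine (card_filter_or' _ _ ?_).trans ?_
    · intro p; simp only [Fin.lt_def, Fin.le_def, Fin.ext_iff, not_and, not_or]; omega
    congr 1
    refine card_filter_or' _ _ ?_
    intro p; simp only [Fin.lt_def, Fin.le_def, Fin.ext_iff, not_and, not_or]; omega
  -- decomposition of crs π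
  have hcrsπ : crs π = (univ.filter (fun p : Fin n × Fin n =>
        p.1 < p.2 ∧ σ p.2 < p.1 ∧ σ p.1 < σ p.2)).card
      + ((univ.filter (fun p : Fin n × Fin n =>
        p.1 < p.2 ∧ p.2 < σ p.1 ∧ σ p.1 < σ p.2)).card
      + utCount σ) := by
    rw [← h_ut]
    show (univ.filter _).card = _
    refine (card_filter_invol (fun p : Fin n × Fin n => (p.2.rev, p.1.rev))
        (fun p => by simp [Fin.rev_rev]) _
        (fun p : Fin n × Fin n =>
          (p.1 < p.2 ∧ σ p.2 < p.1 ∧ σ p.1 < σ p.2) ∨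
          ((p.1 < p.2 ∧ p.2 < σ p.1 ∧ σ p.1 < σ p.2) ∨
           (p.1 < p.2 ∧ p.2 = σ p.1 ∧ σ p.1 < σ p.2)))
        ?_).trans ?_
    · intro q
      simp only [hπ, Fin.rev_rev, Fin.rev_lt_rev, Fin.rev_le_rev]
      simp only [Fin.lt_def, Fin.le_def, Fin.ext_iff]
      omega
    refine (card_filter_or' _ _ ?_).trans ?_
    · intro p; simp only [Fin.lt_def, Fin.le_def, Fin.ext_iff, not_and, not_or]; omega
    congr 1
    refine card_filter_or' _ _ ?_
    intro p; simp only [Fin.lt_def, Fin.le_def, Fin.ext_iff, not_and, not_or]; omega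
  omega
end

section
/- For every permutation σ of [n-1], crs(σ^{-(n,1)}) = crs(σ), where σ^{-(n,1)} is the permutation of [n] obtained from σ⁻¹ by adding 1 to all values and appending the value 1 at position n. Equivalently, the map σ ↦ σ^{-(n,1)} from S_{n-1} to the set of permutations of [n] with last value equal to 1 preserves the number of crossings. -/
open scoped Classical

theorem crs_inv_insert_last (n : ℕ) (hn : 1 ≤ n)
    (σ : Equiv.Perm (Fin (n - 1))) (π : Equiv.Perm (Fin n))
    (h1 : ∀ (i : ℕ) (hi : i < n - 1),
      (π ⟨i, by omega⟩ : ℕ) = (σ.symm ⟨i, hi⟩ : ℕ) + 1)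
    (h2 : (π ⟨n - 1, by omega⟩ : ℕ) = 0) :
    crs π = crs σ := by
  classical
  set e : Fin (n-1) → Fin n := Fin.castLE (by omega) with he
  have key : ∀ x : Fin (n-1), (π (e (σ x)) : ℕ) = (x : ℕ) + 1 := by
    intro x
    have : e (σ x) = ⟨(σ x : ℕ), by omega⟩ := rfl
    rw [this, h1 (σ x) (σ x).isLt]
    congr 1
    have h : (⟨(σ x : ℕ), (σ x).isLt⟩ : Fin (n-1)) = σ x := rfl
    rw [h, Equiv.symm_apply_apply]
  symm
  unfold crs
  apply Finset.card_bij (fun p _ => (e (σ p.1), e (σ p.2)))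
  · intro p hp
    simp only [Finset.mem_filter, Finset.mem_univ, true_and] at hp ⊢
    have k1 := key p.1
    have k2 := key p.2
    simp only [Fin.lt_def, Fin.le_def, he, Fin.coe_castLE] at hp k1 k2 ⊢
    omega
  · intro p hp q hq hpq
    simp only [Prod.mk.injEq] at hpq
    have e1 : σ p.1 = σ q.1 := Fin.castLE_injective _ hpq.1
    have e2 : σ p.2 = σ q.2 := Fin.castLE_injective _ hpq.2
    exact Prod.ext (σ.injective e1) (σ.injective e2)
  · intro b hb
    simp only [Finset.mem_filter, Finset.mem_univ, true_and] at hb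
    -- show b.1.val < n-1 and b.2.val < n-1
    have hab : b.1 < b.2 := by rcases hb with ⟨h,_,_⟩ | ⟨_,_,h⟩ <;> exact h
    have hc : (b.2 : ℕ) < n - 1 := by
      by_contra hcon
      have hceq : (b.2 : ℕ) = n - 1 := by omega
      have : b.2 = ⟨n-1, by omega⟩ := Fin.ext hceq
      rw [this] at hb
      have h2' : (π ⟨n-1, by omega⟩ : ℕ) = 0 := h2
      rcases hb with ⟨_,_,h⟩ | ⟨h,_,_⟩ <;> rw [Fin.lt_def] at h <;> omega
    have ha : (b.1 : ℕ) < n - 1 := by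
      have := hab
      rw [Fin.lt_def] at this; omega
    refine ⟨(σ.symm ⟨b.1, ha⟩, σ.symm ⟨b.2, hc⟩), ?_, ?_⟩
    · simp only [Finset.mem_filter, Finset.mem_univ, true_and]
      have pa : (π b.1 : ℕ) = (σ.symm ⟨b.1, ha⟩ : ℕ) + 1 := h1 _ ha
      have pc : (π b.2 : ℕ) = (σ.symm ⟨b.2, hc⟩ : ℕ) + 1 := h1 _ hc
      simp only [Fin.lt_def, Fin.le_def, Equiv.apply_symm_apply] at hb ⊢
      omega
    · simp only [Equiv.apply_symm_apply, he]
      exact Prod.ext (Fin.ext rfl) (Fin.ext rfl)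
end

section
/- For all n ≥ 2, F_n(321,231;q) = (1+q)·F_{n-1}(321,231;q) + (1−q)·F_{n-2}(321,231;q), where F_m(321,231;q) = Σ_{σ ∈ S_m(321,231)} q^{crs(σ)} and S_m(321,231) is the set of permutations of [m] avoiding both patterns 321 and 231. -/
open scoped Classical

def NoTwo{n : ℕ} (σ : Equiv.Perm (Fin n)) : Prop :=
  ∀ i1 i2 j : Fin n, i1 < i2 → i2 < j → σ j < σ i1 → σ j < σ i2 → False

lemma mono3 {n : ℕ} {a b c : Fin n} (h1 : a < b) (h2 : b < c) : StrictMono ![a,b,c] := by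
  intro x y hxy
  fin_cases x <;> fin_cases y <;>
    first
      | exact h1 | exact h2 | exact h1.trans h2
      | exact absurd hxy (by decide)

lemma char {n : ℕ} (σ : Equiv.Perm (Fin n)) :
    (Avoids σ p321 ∧ Avoids σ p231) ↔ NoTwo σ := by
  constructor
  · rintro ⟨h1, h2⟩ i1 i2 j hi hj ha hb
    rcases lt_or_gt_of_ne (a := σ i2) (b := σ i1)
      (fun h => absurd (σ.injective h) hi.ne') with hc | hc
    · refine h1 ⟨![i1, i2, j], mono3 hi hj, fun x y => ?_⟩
      fin_cases x <;> fin_cases y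
      · exact iff_of_false (lt_irrefl _) (by decide)
      · exact iff_of_false hc.asymm (by decide)
      · exact iff_of_false ha.asymm (by decide)
      · exact iff_of_true hc (by decide)
      · exact iff_of_false (lt_irrefl _) (by decide)
      · exact iff_of_false hb.asymm (by decide)
      · exact iff_of_true ha (by decide)
      · exact iff_of_true hb (by decide)
      · exact iff_of_false (lt_irrefl _) (by decide)
    · refine h2 ⟨![i1, i2, j], mono3 hi hj, fun x y => ?_⟩
      fin_cases x <;> fin_cases y
      · exact iff_of_false (lt_irrefl _) (by decide)
      · exact iff_of_true hc (by decide)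
      · exact iff_of_false ha.asymm (by decide)
      · exact iff_of_false hc.asymm (by decide)
      · exact iff_of_false (lt_irrefl _) (by decide)
      · exact iff_of_false hb.asymm (by decide)
      · exact iff_of_true ha (by decide)
      · exact iff_of_true hb (by decide)
      · exact iff_of_false (lt_irrefl _) (by decide)
  · intro h
    constructor
    · rintro ⟨f, hf, hp⟩
      exact h (f 0) (f 1) (f 2) (hf (by decide)) (hf (by decide))
        ((hp 2 0).mpr (by decide)) ((hp 2 1).mpr (by decide))
    · rintro ⟨f, hf, hp⟩
      exact h (f 0) (f 1) (f 2) (hf (by decide)) (hf (by decide))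
        ((hp 2 0).mpr (by decide)) ((hp 2 1).mpr (by decide))

def emb (n m : ℕ) (hm : m < n) (τ : Equiv.Perm (Fin m)) : Equiv.Perm (Fin n) where
  toFun j := if h : (j : ℕ) < m then ⟨τ ⟨j, h⟩, lt_trans (Fin.is_lt _) hm⟩
    else if h' : (j : ℕ) = m then ⟨n - 1, by omega⟩
    else ⟨(j : ℕ) - 1, by omega⟩
  invFun j := if h : (j : ℕ) < m then ⟨τ.symm ⟨j, h⟩, lt_trans (Fin.is_lt _) hm⟩
    else if h' : (j : ℕ) = n - 1 then ⟨m, hm⟩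
    else ⟨(j : ℕ) + 1, by have := j.is_lt; omega⟩
  left_inv := by
    intro j
    rcases lt_trichotomy (j : ℕ) m with h | h | h
    · simp only [dif_pos h]
      have h2 : ((τ ⟨j, h⟩ : Fin m) : ℕ) < m := Fin.is_lt _
      simp only [dif_pos h2]
      ext
      simp
    · have h2 : ¬ ((j : ℕ) < m) := by omega
      simp only [dif_neg h2, dif_pos h]
      have h3 : ¬ (n - 1 < m) := by omega
      have h4 : ((⟨n-1, by omega⟩ : Fin n) : ℕ) = n - 1 := rfl
      simp only [h4, dif_neg h3, dif_pos rfl]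
      ext; simp [h]
    · have h2 : ¬ ((j : ℕ) < m) := by omega
      have h3 : ¬ ((j : ℕ) = m) := by omega
      simp only [dif_neg h2, dif_neg h3]
      have hj := j.is_lt
      have h4 : ¬ ((j : ℕ) - 1 < m) := by omega
      have h5 : ¬ ((j : ℕ) - 1 = n - 1) := by omega
      simp only [dif_neg h4, dif_neg h5]
      ext; simp; omega
  right_inv := by
    intro j
    rcases lt_trichotomy (j : ℕ) m with h | h | h
    · simp only [dif_pos h]
      have h2 : ((τ.symm ⟨j, h⟩ : Fin m) : ℕ) < m := Fin.is_lt _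
      simp only [dif_pos h2]
      ext; simp
    · have h2 : ¬ ((j : ℕ) < m) := by omega
      by_cases h' : (j : ℕ) = n - 1
      · simp only [dif_neg h2, dif_pos h']
        have h3 : ¬ (m < m) := lt_irrefl m
        simp only [dif_neg h3, dif_pos rfl]
        ext; simp [h']
      · simp only [dif_neg h2, dif_neg h']
        have hj := j.is_lt
        have h4 : ¬ ((j:ℕ) + 1 < m) := by omega
        have h5 : ¬ ((j:ℕ) + 1 = m) := by omega
        simp only [dif_neg h4, dif_neg h5]
        ext; simp
    · have h2 : ¬ ((j : ℕ) < m) := by omega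
      by_cases h' : (j : ℕ) = n - 1
      · simp only [dif_neg h2, dif_pos h']
        simp only [dif_neg (lt_irrefl m), dif_pos rfl]
        ext; simp [h']
      · simp only [dif_neg h2, dif_neg h']
        have hj := j.is_lt
        have h4 : ¬ ((j:ℕ) + 1 < m) := by omega
        have h5 : ¬ ((j:ℕ) + 1 = m) := by omega
        simp only [dif_neg h4, dif_neg h5]
        ext; simp

lemma emb_lt {n m : ℕ} (hm : m < n) (τ : Equiv.Perm (Fin m)) (j : Fin n) (h : (j:ℕ) < m) :
    ((emb n m hm τ) j : ℕ) = τ ⟨j, h⟩ := by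
  simp only [emb, Equiv.coe_fn_mk, dif_pos h]

lemma emb_eq {n m : ℕ} (hm : m < n) (τ : Equiv.Perm (Fin m)) (j : Fin n) (h : (j:ℕ) = m) :
    ((emb n m hm τ) j : ℕ) = n - 1 := by
  simp only [emb, Equiv.coe_fn_mk, dif_neg (by omega : ¬ ((j:ℕ) < m)), dif_pos h]

lemma emb_gt {n m : ℕ} (hm : m < n) (τ : Equiv.Perm (Fin m)) (j : Fin n) (h : m < (j:ℕ)) :
    ((emb n m hm τ) j : ℕ) = (j : ℕ) - 1 := by
  simp only [emb, Equiv.coe_fn_mk, dif_neg (by omega : ¬ ((j:ℕ) < m)),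
    dif_neg (by omega : ¬ ((j:ℕ) = m))]

lemma emb_inj {n m : ℕ} (hm : m < n) : Function.Injective (emb n m hm) := by
  intro τ1 τ2 h
  ext i
  have h1 := emb_lt hm τ1 ⟨i, lt_trans i.is_lt hm⟩ i.is_lt
  have h2 := emb_lt hm τ2 ⟨i, lt_trans i.is_lt hm⟩ i.is_lt
  rw [h] at h1
  simp only [Fin.eta] at h1 h2
  omega

lemma emb_symm_last {n m : ℕ} (hm : m < n) (τ : Equiv.Perm (Fin m)) :
    ((emb n m hm τ).symm ⟨n-1, by omega⟩ : ℕ) = m := by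
  have : (emb n m hm τ) ⟨m, hm⟩ = ⟨n-1, by omega⟩ := by
    ext; exact emb_eq hm τ ⟨m, hm⟩ rfl
  rw [← this, Equiv.symm_apply_apply]

lemma noTwo_emb{n m : ℕ} (hm : m < n) (τ : Equiv.Perm (Fin m)) (ht : NoTwo τ) :
    NoTwo (emb n m hm τ) := by
  intro i1 i2 j hi hj ha hb
  rw [Fin.lt_def] at hi hj ha hb
  rcases lt_trichotomy (j : ℕ) m with h | h | h
  · have l1 : (i1 : ℕ) < m := by omega
    have l2 : (i2 : ℕ) < m := by omega
    rw [emb_lt hm τ j h] at ha hb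
    rw [emb_lt hm τ i1 l1] at ha
    rw [emb_lt hm τ i2 l2] at hb
    exact ht ⟨i1, l1⟩ ⟨i2, l2⟩ ⟨j, h⟩ (Fin.mk_lt_mk.mpr hi) (Fin.mk_lt_mk.mpr hj)
      (Fin.lt_def.mpr ha) (Fin.lt_def.mpr hb)
  · -- σ j = n-1 is max
    rw [emb_eq hm τ j h] at ha
    have := ((emb n m hm τ) i1).is_lt
    omega
  · rw [emb_gt hm τ j h] at ha hb
    -- σ i1 > j-1 ≥ m and σ i2 > j-1 ≥ m with i1 < i2 < j: impossible
    have k1 : (i1 : ℕ) ≠ m ∨ (i2 : ℕ) ≠ m := by omega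
    have key : ∀ i : Fin n, (i : ℕ) < j → (i:ℕ) ≠ m → ¬ ((j:ℕ) - 1 < ((emb n m hm τ) i : ℕ)) := by
      intro i hij him
      rcases lt_trichotomy (i : ℕ) m with hc | hc | hc
      · rw [emb_lt hm τ i hc]
        have := (τ ⟨i, hc⟩).is_lt
        omega
      · exact absurd hc him
      · rw [emb_gt hm τ i hc]
        omega
    rcases k1 with k | k
    · exact key i1 (by omega) k ha
    · exact key i2 (by omega) k hb

lemma noTwo_of_emb {n m : ℕ} (hm : m < n) (τ : Equiv.Perm (Fin m))
    (ht : NoTwo (emb n m hm τ)) : NoTwo τ := by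
  intro i1 i2 j hi hj ha hb
  have c : ∀ i : Fin m, ((emb n m hm τ) ⟨i, lt_trans i.is_lt hm⟩ : ℕ) = τ i := by
    intro i; rw [emb_lt hm τ _ i.is_lt]
  refine ht ⟨i1, lt_trans i1.is_lt hm⟩ ⟨i2, lt_trans i2.is_lt hm⟩ ⟨j, lt_trans j.is_lt hm⟩
    (Fin.mk_lt_mk.mpr hi) (Fin.mk_lt_mk.mpr hj) ?_ ?_ <;>
    [skip; skip] <;> rw [Fin.lt_def, c, c]
  · exact ha
  · exact hb

lemma crs_emb{n m : ℕ} (hm : m < n) (τ : Equiv.Perm (Fin m)) :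
    crs (emb n m hm τ) = (n - m - 2) + crs τ := by
  classical
  set σ := emb n m hm τ with hσ
  set g : Fin m × Fin m ↪ Fin n × Fin n :=
    (Fin.castLEEmb hm.le).prodMap (Fin.castLEEmb hm.le) with hg
  have gval : ∀ q : Fin m × Fin m, ((g q).1 : ℕ) = (q.1 : ℕ) ∧ ((g q).2 : ℕ) = (q.2 : ℕ) :=
    fun q => ⟨rfl, rfl⟩
  set Sn := Finset.univ.filter (fun p : Fin n × Fin n =>
    (p.1 < p.2 ∧ p.2 < σ p.1 ∧ σ p.1 < σ p.2) ∨
    (σ p.1 < σ p.2 ∧ σ p.2 ≤ p.1 ∧ p.1 < p.2)) with hSn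
  set Sm := Finset.univ.filter (fun p : Fin m × Fin m =>
    (p.1 < p.2 ∧ p.2 < τ p.1 ∧ τ p.1 < τ p.2) ∨
    (τ p.1 < τ p.2 ∧ τ p.2 ≤ p.1 ∧ p.1 < p.2)) with hSm
  set B := Finset.univ.filter (fun p : Fin n × Fin n =>
    m < (p.1 : ℕ) ∧ (p.2 : ℕ) = (p.1 : ℕ) + 1) with hB
  have main : Sn = Sm.map g ∪ B := by
    ext p
    obtain ⟨p1, p2⟩ := p
    simp only [hSn, hSm, hB, Finset.mem_union, Finset.mem_filter, Finset.mem_map,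
      Finset.mem_univ, true_and, Fin.lt_def, Fin.le_def]
    have a1 := (σ p1).is_lt
    have a2 := (σ p2).is_lt
    constructor
    · intro hc
      rcases lt_trichotomy (p1 : ℕ) m with h1 | h1 | h1
      · rcases lt_trichotomy (p2 : ℕ) m with h2 | h2 | h2
        · left
          refine ⟨(⟨p1, h1⟩, ⟨p2, h2⟩), ?_, ?_⟩
          · have e1 := emb_lt hm τ p1 h1
            have e2 := emb_lt hm τ p2 h2
            rw [← hσ] at e1 e2
            simp only [Fin.lt_def, Fin.le_def]
            omega
          · apply Prod.ext <;> apply Fin.ext <;> simp [hg]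
        · exfalso
          have e1 := emb_lt hm τ p1 h1
          have e2 := emb_eq hm τ p2 h2
          rw [← hσ] at e1 e2
          have := (τ ⟨p1, h1⟩).is_lt
          omega
        · exfalso
          have e1 := emb_lt hm τ p1 h1
          have e2 := emb_gt hm τ p2 h2
          rw [← hσ] at e1 e2
          have := (τ ⟨p1, h1⟩).is_lt
          omega
      · exfalso
        have e1 := emb_eq hm τ p1 h1
        rw [← hσ] at e1
        omega
      · right
        refine ⟨h1, ?_⟩
        have e1 := emb_gt hm τ p1 h1
        rw [← hσ] at e1
        rcases lt_trichotomy (p2 : ℕ) m with h2 | h2 | h2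
        · omega
        · omega
        · have e2 := emb_gt hm τ p2 h2
          rw [← hσ] at e2
          omega
    · rintro (⟨q, hq, hgq⟩ | ⟨h1, h2⟩)
      · have e1 : ((σ ((Fin.castLEEmb hm.le) q.1)) : ℕ) = τ q.1 := emb_lt hm τ _ q.1.is_lt
        have e2 : ((σ ((Fin.castLEEmb hm.le) q.2)) : ℕ) = τ q.2 := emb_lt hm τ _ q.2.is_lt
        have g1 : (Fin.castLEEmb hm.le) q.1 = p1 := congrArg Prod.fst hgq
        have g2 : (Fin.castLEEmb hm.le) q.2 = p2 := congrArg Prod.snd hgq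
        rw [g1] at e1
        rw [g2] at e2
        have v1 : (p1 : ℕ) = (q.1 : ℕ) := by rw [← g1]; rfl
        have v2 : (p2 : ℕ) = (q.2 : ℕ) := by rw [← g2]; rfl
        omega
      · have e1 := emb_gt hm τ p1 h1
        have e2 := emb_gt hm τ p2 (by omega)
        rw [← hσ] at e1 e2
        omega
  have hdisj : Disjoint (Sm.map g) B := by
    rw [Finset.disjoint_left]
    rintro p hp hpB
    obtain ⟨q, _, rfl⟩ := Finset.mem_map.mp hp
    simp only [hB, Finset.mem_filter, Finset.mem_univ, true_and] at hpB
    have := (gval q).1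
    have := q.1.is_lt
    omega
  have hBcard : B.card = n - m - 2 := by
    rw [show n - m - 2 = ((n-1) - (m+1)) by omega, ← Nat.card_Ico]
    refine Finset.card_bij' (fun p _ => ((p.1 : ℕ)))
      (fun a ha => ((⟨a, by simp only [Finset.mem_Ico] at ha; omega⟩ : Fin n),
        (⟨a + 1, by simp only [Finset.mem_Ico] at ha; omega⟩ : Fin n))) ?_ ?_ ?_ ?_
    · intro p hp
      simp only [hB, Finset.mem_filter, Finset.mem_univ, true_and] at hp
      have := p.2.is_lt
      simp only [Finset.mem_Ico]
      omega
    · intro a ha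
      simp only [Finset.mem_Ico] at ha
      simp only [hB, Finset.mem_filter, Finset.mem_univ, true_and]
      refine ⟨by omega, ?_⟩
      simp
    · intro p hp
      simp only [hB, Finset.mem_filter, Finset.mem_univ, true_and] at hp
      apply Prod.ext <;> apply Fin.ext <;> simp only <;> omega
    · intro a ha
      rfl
  have : crs (emb n m hm τ) = Sn.card := rfl
  rw [this, main, Finset.card_union_of_disjoint hdisj, Finset.card_map, hBcard]
  have : crs τ = Sm.card := rfl
  rw [this]
  omega

lemma exists_emb{n : ℕ} (hn : 1 ≤ n) (σ : Equiv.Perm (Fin n)) (h : NoTwo σ) :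
    ∃ (hm : ((σ.symm ⟨n-1, by omega⟩ : Fin n) : ℕ) < n) (τ : Equiv.Perm (Fin ((σ.symm ⟨n-1, by omega⟩ : Fin n) : ℕ))),
      σ = emb n _ hm τ := by
  set M : Fin n := ⟨n-1, by omega⟩ with hM
  have hMv : (M : ℕ) = n - 1 := rfl
  set m : ℕ := ((σ.symm M : Fin n) : ℕ) with hmdef
  have hm : m < n := (σ.symm M).is_lt
  have hfix : σ (σ.symm M) = M := σ.apply_symm_apply M
  have hmv : ((⟨m, hm⟩ : Fin n) : ℕ) = m := rfl
  have hne : ∀ j : Fin n, (j : ℕ) ≠ m → (σ j : ℕ) < n - 1 := by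
    intro j hj
    have h1 : σ j ≠ M := by
      intro he
      exact hj (by rw [hmdef, ← he, Equiv.symm_apply_apply])
    have := (σ j).is_lt
    have : (σ j : ℕ) ≠ n - 1 := fun he => h1 (Fin.ext he)
    omega
  -- increasing after m
  have L1 : ∀ i j : Fin n, m < (i : ℕ) → (i : ℕ) < (j : ℕ) → (σ i : ℕ) < (σ j : ℕ) := by
    intro i j hi hij
    rcases lt_trichotomy ((σ i : ℕ)) ((σ j : ℕ)) with hc | hc | hc
    · exact hc
    · exact absurd (σ.injective (Fin.ext hc)) (fun he => by rw [he] at hij; exact lt_irrefl _ hij)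
    · exfalso
      refine h (σ.symm M) i j ?_ ?_ ?_ ?_
      · exact Fin.lt_def.mpr (by omega)
      · exact Fin.lt_def.mpr (by omega)
      · rw [hfix]
        exact Fin.lt_def.mpr (by have := hne j (by omega); rw [hMv] at *; omega)
      · exact Fin.lt_def.mpr hc

  have L2 : ∀ i j : Fin n, (i : ℕ) < m → m < (j : ℕ) → (σ i : ℕ) < (σ j : ℕ) := by
    intro i j hi hj
    rcases lt_trichotomy ((σ i : ℕ)) ((σ j : ℕ)) with hc | hc | hc
    · exact hc
    · exact absurd (σ.injective (Fin.ext hc)) (fun he => by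
        have : (i:ℕ) = (j:ℕ) := by rw [he]
        omega)
    · exfalso
      refine h i (σ.symm M) j ?_ ?_ ?_ ?_
      · exact Fin.lt_def.mpr (by omega)
      · exact Fin.lt_def.mpr (by omega)
      · exact Fin.lt_def.mpr hc
      · rw [hfix]
        exact Fin.lt_def.mpr (by have := hne j (by omega); rw [hMv] at *; omega)
  -- values before m are below m
  have L3 : ∀ i : Fin n, (i : ℕ) < m → (σ i : ℕ) < m := by
    intro i hi
    have hsub : (Finset.Ici (⟨m, hm⟩ : Fin n)).image σ ⊆ Finset.Ioi (σ i) := by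
      intro v hv
      obtain ⟨j, hj, rfl⟩ := Finset.mem_image.mp hv
      rw [Finset.mem_Ici] at hj
      rw [Finset.mem_Ioi]
      have hj' : m ≤ (j : ℕ) := hj
      rcases eq_or_lt_of_le hj' with he | hlt
      · have : j = σ.symm M := Fin.ext (by omega)
        rw [this, hfix]
        exact Fin.lt_def.mpr (by have := hne i (by omega); omega)
      · exact Fin.lt_def.mpr (L2 i j hi hlt)
    have hcard := Finset.card_le_card hsub
    rw [Finset.card_image_of_injective _ σ.injective, Fin.card_Ici, Fin.card_Ioi] at hcard
    rw [hmv] at hcard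
    have := (σ i).is_lt
    omega
  -- values at or after m are at least m
  have L4 : ∀ j : Fin n, m ≤ (j : ℕ) → m ≤ (σ j : ℕ) := by
    intro j hj
    by_contra hcon
    push_neg at hcon
    -- image of Iio ⟨m⟩ = Iio ⟨m⟩
    have hsub : (Finset.Iio (⟨m, hm⟩ : Fin n)).image σ ⊆ Finset.Iio (⟨m, hm⟩ : Fin n) := by
      intro v hv
      obtain ⟨i, hi, rfl⟩ := Finset.mem_image.mp hv
      rw [Finset.mem_Iio] at hi ⊢
      exact Fin.lt_def.mpr (L3 i hi)
    have heq : (Finset.Iio (⟨m, hm⟩ : Fin n)).image σ = Finset.Iio (⟨m, hm⟩ : Fin n) :=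
      Finset.eq_of_subset_of_card_le hsub
        (by rw [Finset.card_image_of_injective _ σ.injective])
    have : σ j ∈ (Finset.Iio (⟨m, hm⟩ : Fin n)).image σ := by
      rw [heq, Finset.mem_Iio]
      exact Fin.lt_def.mpr hcon
    obtain ⟨i, hi, he⟩ := Finset.mem_image.mp this
    rw [Finset.mem_Iio] at hi
    have := σ.injective he
    rw [this] at hi
    have := Fin.lt_def.mp hi
    omega
  -- the shift
  have L5 : ∀ j : Fin n, m < (j : ℕ) → (σ j : ℕ) = (j : ℕ) - 1 := by
    intro j hj
    have hub : (σ j : ℕ) ≤ (j : ℕ) - 1 := by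
      have hsub : (Finset.Ici j).image σ ⊆ Finset.Ico (σ j) M := by
        intro v hv
        obtain ⟨k, hk, rfl⟩ := Finset.mem_image.mp hv
        rw [Finset.mem_Ici] at hk
        rw [Finset.mem_Ico]
        have hk' : (j:ℕ) ≤ (k:ℕ) := hk
        constructor
        · rcases eq_or_lt_of_le hk' with he | hlt
          · exact le_of_eq (congrArg σ (Fin.ext he.symm) ▸ rfl)
          · exact le_of_lt (Fin.lt_def.mpr (L1 j k hj hlt))
        · exact Fin.lt_def.mpr (by have := hne k (by omega); simp [hM]; omega)
      have hcard := Finset.card_le_card hsub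
      rw [Finset.card_image_of_injective _ σ.injective, Fin.card_Ici, Fin.card_Ico] at hcard
      have := j.is_lt
      have := L4 j (by omega)
      simp only [hM] at hcard
      omega
    have hlb : (j : ℕ) - 1 ≤ (σ j : ℕ) := by
      have hsub : (Finset.Ioc (⟨m, hm⟩ : Fin n) j).image σ ⊆ Finset.Icc (⟨m, hm⟩ : Fin n) (σ j) := by
        intro v hv
        obtain ⟨k, hk, rfl⟩ := Finset.mem_image.mp hv
        rw [Finset.mem_Ioc] at hk
        rw [Finset.mem_Icc]
        have hk1 : m < (k:ℕ) := hk.1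
        have hk2 : (k:ℕ) ≤ (j:ℕ) := hk.2
        constructor
        · exact Fin.le_def.mpr (L4 k (by omega))
        · rcases eq_or_lt_of_le hk2 with he | hlt
          · exact le_of_eq (congrArg σ (Fin.ext he))
          · exact le_of_lt (Fin.lt_def.mpr (L1 k j hk1 hlt))
      have hcard := Finset.card_le_card hsub
      rw [Finset.card_image_of_injective _ σ.injective, Fin.card_Ioc, Fin.card_Icc] at hcard
      rw [hmv] at hcard
      have := L4 j (by omega)
      have := j.is_lt
      omega
    omega
  -- construct τ
  have hinj : Function.Injective (fun i : Fin m => (⟨(σ ⟨i, lt_trans i.is_lt hm⟩ : ℕ), L3 _ i.is_lt⟩ : Fin m)) := by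
    intro a b hab
    have : (σ ⟨a, lt_trans a.is_lt hm⟩ : ℕ) = (σ ⟨b, lt_trans b.is_lt hm⟩ : ℕ) := by
      have := congrArg (fun x : Fin m => (x : ℕ)) hab
      simpa using this
    have := σ.injective (Fin.ext this)
    have : (a : ℕ) = (b : ℕ) := congrArg (fun x : Fin n => (x : ℕ)) this
    exact Fin.ext this
  set τ : Equiv.Perm (Fin m) := Equiv.ofBijective _ (Finite.injective_iff_bijective.mp hinj) with hτ
  refine ⟨hm, τ, ?_⟩
  ext j
  rcases lt_trichotomy ((j : ℕ)) m with hc | hc | hc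
  · rw [emb_lt hm τ j hc]
    have hv : τ ⟨j, hc⟩ = (⟨(σ ⟨(j:ℕ), lt_trans hc hm⟩ : ℕ), L3 _ hc⟩ : Fin m) := rfl
    rw [hv]
  · rw [emb_eq hm τ j hc]
    have : j = σ.symm M := Fin.ext (by omega)
    rw [this, hfix]
  · rw [emb_gt hm τ j hc]
    exact L5 j hc

lemma key(n : ℕ) (hn : 1 ≤ n) :
    Fpoly n (fun σ => NoTwo σ) =
      ∑ m ∈ Finset.range n, Polynomial.X ^ (n - m - 2) * Fpoly m (fun σ => NoTwo σ) := by
  classical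
  have hrepr : ∀ k, Fpoly k (fun σ => NoTwo σ) =
      ∑ σ ∈ Finset.univ.filter (fun σ : Equiv.Perm (Fin k) => NoTwo σ),
        Polynomial.X ^ crs σ := by
    intro k
    rw [Fpoly, Finset.sum_filter]
  rw [hrepr n]
  rw [← Finset.sum_fiberwise_of_maps_to
    (g := fun σ : Equiv.Perm (Fin n) => ((σ.symm ⟨n-1, by omega⟩ : Fin n) : ℕ))
    (t := Finset.range n) (fun σ _ => Finset.mem_range.mpr (Fin.is_lt _))]
  apply Finset.sum_congr rfl
  intro m hm'
  have hm : m < n := Finset.mem_range.mp hm'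
  rw [hrepr m, Finset.mul_sum]
  refine (Finset.sum_bij (i := fun τ _ => emb n m hm τ) ?_ ?_ ?_ ?_).symm
  · intro τ hτ
    simp only [Finset.mem_filter, Finset.mem_univ, true_and] at hτ ⊢
    refine ⟨noTwo_emb hm τ hτ, ?_⟩
    exact emb_symm_last hm τ
  · intro τ1 h1 τ2 h2 he
    exact emb_inj hm he
  · intro σ hσ
    simp only [Finset.mem_filter, Finset.mem_univ, true_and] at hσ
    obtain ⟨hnt, hpos⟩ := hσ
    obtain ⟨hm', τ, hτ⟩ := exists_emb hn σ hnt
    subst hpos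
    exact ⟨τ, Finset.mem_filter.mpr ⟨Finset.mem_univ _, noTwo_of_emb _ τ (hτ ▸ hnt)⟩, hτ.symm⟩
  · intro τ hτ
    rw [crs_emb hm τ, pow_add]

noncomputable def Gp(k : ℕ) : Polynomial ℤ := Fpoly k (fun σ => NoTwo σ)

theorem final (n : ℕ) (hn : 2 ≤ n) :
    Gp n = (1 + Polynomial.X) * Gp (n - 1) + (1 - Polynomial.X) * Gp (n - 2) := by
  obtain ⟨a, rfl⟩ : ∃ a, n = a + 2 := ⟨n - 2, by omega⟩
  have h1 : a + 2 - 1 = a + 1 := rfl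
  have h2 : a + 2 - 2 = a := rfl
  rw [h1, h2]
  have k1 : Gp (a+2) = ∑ m ∈ Finset.range (a+2), Polynomial.X ^ (a + 2 - m - 2) * Gp m :=
    key (a+2) (by omega)
  have k2 : Gp (a+1) = ∑ m ∈ Finset.range (a+1), Polynomial.X ^ (a + 1 - m - 2) * Gp m :=
    key (a+1) (by omega)
  rw [Finset.sum_range_succ, Finset.sum_range_succ] at k1
  rw [Finset.sum_range_succ] at k2
  rw [show a + 2 - (a+1) - 2 = 0 from by omega, show a + 2 - a - 2 = 0 from by omega] at k1
  rw [show a + 1 - a - 2 = 0 from by omega] at k2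
  simp only [pow_zero, one_mul] at k1 k2
  have e1 : ∑ m ∈ Finset.range a, Polynomial.X ^ (a + 2 - m - 2) * Gp m =
      ∑ m ∈ Finset.range a, Polynomial.X ^ (a - m) * Gp m := by
    refine Finset.sum_congr rfl fun m hm => ?_
    rw [show a + 2 - m - 2 = a - m from by omega]
  rw [e1] at k1
  have e2 : Polynomial.X * Gp (a + 1) = Polynomial.X * Gp a +
      ∑ m ∈ Finset.range a, Polynomial.X ^ (a - m) * Gp m := by
    rw [k2, mul_add, Finset.mul_sum, add_comm]
    congr 1
    refine Finset.sum_congr rfl fun m hm => ?_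
    have hma : m < a := Finset.mem_range.mp hm
    rw [← mul_assoc, ← pow_succ', show a + 1 - m - 2 + 1 = a - m from by omega]
  have hS : ∑ m ∈ Finset.range a, Polynomial.X ^ (a - m) * Gp m =
      Polynomial.X * Gp (a+1) - Polynomial.X * Gp a := by rw [e2]; ring
  rw [k1, hS]
  ring

theorem Fpoly_rec_321_231 (n : ℕ) (hn : 2 ≤ n) :
    Fpoly n (fun σ => Avoids σ p321 ∧ Avoids σ p231) =
      (1 + Polynomial.X) * Fpoly (n - 1) (fun σ => Avoids σ p321 ∧ Avoids σ p231)
        + (1 - Polynomial.X) * Fpoly (n - 2) (fun σ => Avoids σ p321 ∧ Avoids σ p231) := by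
  have bridge : ∀ k, Fpoly k (fun σ => Avoids σ p321 ∧ Avoids σ p231) = Gp k := by
    intro k
    unfold Gp Fpoly
    apply Finset.sum_congr rfl
    intro σ _
    simp only [char]
  rw [bridge, bridge, bridge]
  exact final n hn
end

section
/- For all n ≥ 2 and k ≥ 0, the number of permutations σ of [n] avoiding 123 and 132 with σ(n−1) = 1 and crs(σ) = k equals the binomial coefficient C(n−2, k). -/
open scoped Classical

namespace CrsProof

/-- start of the run of `false`s immediately preceding `t`. -/
def zf (c : ℕ → Bool) : ℕ → ℕ
  | 0 => 0
  | t+1 => if c t then t+1 else zf c t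

lemma zf_le (c : ℕ → Bool) (t : ℕ) : zf c t ≤ t := by
  induction t with
  | zero => simp [zf]
  | succ t ih => simp only [zf]; split <;> omega

lemma lt_zf (c : ℕ → Bool) {s t : ℕ} (h : s < t) (hc : c s = true) : s < zf c t := by
  induction t with
  | zero => omega
  | succ t ih =>
    simp only [zf]
    rcases Nat.lt_succ_iff_lt_or_eq.1 h with h' | h'
    · split <;> [omega; exact ih h']
    · subst h'; rw [hc]; simp

lemma c_eq_false_of (c : ℕ → Bool) {s t : ℕ} (h1 : zf c t ≤ s) (h2 : s < t) : c s = false := by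
  cases hcs : c s with
  | false => rfl
  | true => exact absurd (lt_zf c h2 hcs) (by omega)

lemma c_pred_zf (c : ℕ → Bool) {t : ℕ} (h : 1 ≤ zf c t) : c (zf c t - 1) = true := by
  induction t with
  | zero => simp [zf] at h
  | succ t ih =>
    simp only [zf] at h ⊢
    by_cases hc : c t
    · simp [hc]
    · simp only [hc, if_neg, Bool.false_eq_true, if_false] at h ⊢; exact ih h

lemma zf_run (c : ℕ → Bool) {i t : ℕ} (hi : i ≤ t) (h : ∀ s, i ≤ s → s < t → c s = false) :
    zf c t = zf c i := by
  induction t with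
  | zero => have : i = 0 := by omega
            subst this; rfl
  | succ t ih =>
    rcases Nat.lt_succ_iff_lt_or_eq.1 (Nat.lt_succ_of_le hi) with h' | h'
    · have : c t = false := h t (by omega) (by omega)
      simp only [zf, this, Bool.false_eq_true, if_false]
      exact ih (by omega) (fun s hs1 hs2 => h s hs1 (by omega))
    · subst h'; rfl

lemma zf_zero_iff (c : ℕ → Bool) (t : ℕ) : zf c t = 0 ↔ ∀ s < t, c s = false := by
  constructor
  · intro h s hs; exact c_eq_false_of c (by omega) hs
  · intro h
    have := zf_run c (i := 0) (t := t) (by omega) (fun s _ hs => h s hs)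
    simpa [zf] using this

lemma zf_congr {c c' : ℕ → Bool} {t : ℕ} (h : ∀ s < t, c s = c' s) : zf c t = zf c' t := by
  induction t with
  | zero => rfl
  | succ t ih =>
    simp only [zf, h t (by omega)]
    split <;> [rfl; exact ih (fun s hs => h s (by omega))]

lemma exists_run_of_exists {c : ℕ → Bool} {i U : ℕ} (h : ∃ j, i < j ∧ j < U ∧ c j = true) :
    ∃ j, i < j ∧ j < U ∧ c j = true ∧ ∀ t, i < t → t < j → c t = false := by
  classical
  obtain ⟨h1, h2, h3⟩ := Nat.find_spec h
  refine ⟨Nat.find h, h1, h2, h3, fun t ht1 ht2 => ?_⟩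
  have := Nat.find_min h ht2
  cases hct : c t with
  | false => rfl
  | true => exact absurd ⟨ht1, by omega, hct⟩ this

/-- The crossing-left-endpoint predicate, in terms of the choice string. -/
def QP (n : ℕ) (c : ℕ → Bool) (i : ℕ) : Prop :=
  (i + 3 ≤ n ∧ c i = false ∧
    ((∃ j, i < j ∧ i + j + 2 < n ∧ c j = true ∧ ∀ t, i < t → t < j → c t = false) ∨
      n ≤ i + zf c i + 1)) ∨
  (i + 2 = n ∧ 1 ≤ zf c (n - 2))

noncomputable def G (n : ℕ) (c : ℕ → Bool) : ℕ :=
  ((Finset.range (n - 1)).filter (QP n c)).card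

lemma QP_congr {n : ℕ} {c c' : ℕ → Bool} (h : ∀ t < n - 2, c t = c' t) {i : ℕ} :
    QP n c i ↔ QP n c' i := by
  have hz : ∀ t, t ≤ n - 2 → zf c t = zf c' t := fun t ht =>
    zf_congr (fun s hs => h s (by omega))
  unfold QP
  constructor
  · rintro (⟨h1, h2, h3 | h3⟩ | ⟨h1, h2⟩)
    · refine Or.inl ⟨h1, by rw [← h i (by omega)]; exact h2, Or.inl ?_⟩
      obtain ⟨j, hj1, hj2, hj3, hj4⟩ := h3
      exact ⟨j, hj1, hj2, by rw [← h j (by omega)]; exact hj3,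
        fun t ht1 ht2 => by rw [← h t (by omega)]; exact hj4 t ht1 ht2⟩
    · exact Or.inl ⟨h1, by rw [← h i (by omega)]; exact h2,
        Or.inr (by rw [← hz i (by omega)]; exact h3)⟩
    · exact Or.inr ⟨h1, by rw [← hz (n-2) (by omega)]; exact h2⟩
  · rintro (⟨h1, h2, h3 | h3⟩ | ⟨h1, h2⟩)
    · refine Or.inl ⟨h1, by rw [h i (by omega)]; exact h2, Or.inl ?_⟩
      obtain ⟨j, hj1, hj2, hj3, hj4⟩ := h3
      exact ⟨j, hj1, hj2, by rw [h j (by omega)]; exact hj3,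
        fun t ht1 ht2 => by rw [h t (by omega)]; exact hj4 t ht1 ht2⟩
    · exact Or.inl ⟨h1, by rw [h i (by omega)]; exact h2,
        Or.inr (by rw [hz i (by omega)]; exact h3)⟩
    · exact Or.inr ⟨h1, by rw [hz (n-2) (by omega)]; exact h2⟩

lemma G_congr {n : ℕ} {c c' : ℕ → Bool} (h : ∀ t < n - 2, c t = c' t) : G n c = G n c' := by
  unfold G
  congr 1
  apply Finset.filter_congr
  intro i _
  exact QP_congr h



/-! ### The join recursion -/

def cjoin (M : ℕ) (b0 : Bool) (d : ℕ → Bool) (b1 : Bool) : ℕ → Bool :=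
  fun t => if t = 0 then b0 else if t = M + 1 then b1 else d (t - 1)

lemma cjoin_zero (M : ℕ) (b0 : Bool) (d : ℕ → Bool) (b1 : Bool) :
    cjoin M b0 d b1 0 = b0 := by simp [cjoin]

lemma cjoin_top (M : ℕ) (b0 : Bool) (d : ℕ → Bool) (b1 : Bool) :
    cjoin M b0 d b1 (M + 1) = b1 := by simp [cjoin]

lemma cjoin_mid (M : ℕ) (b0 : Bool) (d : ℕ → Bool) (b1 : Bool) {t : ℕ} (h1 : t ≠ 0)
    (h2 : t ≠ M + 1) : cjoin M b0 d b1 t = d (t - 1) := by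
  simp only [cjoin]; rw [if_neg h1, if_neg h2]

lemma zf_join (M : ℕ) (b0 : Bool) (d : ℕ → Bool) (b1 : Bool) :
    ∀ t, t ≤ M → zf (cjoin M b0 d b1) (t + 1) =
      if b0 = true ∨ zf d t ≠ 0 then zf d t + 1 else 0 := by
  intro t
  induction t with
  | zero =>
    intro _
    have h0 : cjoin M b0 d b1 0 = b0 := by simp [cjoin]
    simp only [zf, h0]
    cases b0 <;> simp [zf]
  | succ t ih =>
    intro ht
    have hmid : cjoin M b0 d b1 (t + 1) = d t := by
      rw [cjoin_mid M b0 d b1 (by omega) (by omega)]; simp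
    have h1 : zf (cjoin M b0 d b1) (t + 2) =
        if cjoin M b0 d b1 (t+1) then t + 2 else zf (cjoin M b0 d b1) (t + 1) := rfl
    have h2 : zf d (t + 1) = if d t then t + 1 else zf d t := rfl
    rw [h1, hmid, h2]
    cases hdt : d t with
    | true => simp
    | false =>
      simp only [Bool.false_eq_true, if_false]
      exact ih (by omega)

lemma zf_join_top (M : ℕ) (b0 : Bool) (d : ℕ → Bool) (b1 : Bool) :
    zf (cjoin M b0 d b1) (M + 2) =
      if b1 = true then M + 2 else if b0 = true ∨ zf d M ≠ 0 then zf d M + 1 else 0 := by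
  have h1 : zf (cjoin M b0 d b1) (M + 2) =
      if cjoin M b0 d b1 (M+1) then M + 2 else zf (cjoin M b0 d b1) (M + 1) := rfl
  rw [h1, cjoin_top]
  cases b1 with
  | true => simp
  | false =>
    simp only [Bool.false_eq_true, if_false]
    exact zf_join M b0 d false M le_rfl

lemma QP_join_mid (M : ℕ) (b0 : Bool) (d : ℕ → Bool) (b1 : Bool) {i : ℕ} (hi : i < M) :
    QP (M + 4) (cjoin M b0 d b1) (i + 1) ↔ QP (M + 2) d i := by
  have hz := zf_join M b0 d b1 i (by omega)
  have hzdi := zf_le d i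
  constructor
  · rintro (⟨h1, h2, h3 | h3⟩ | ⟨h1, _⟩)
    · -- A-part
      refine Or.inl ⟨by omega, by rwa [cjoin_mid M b0 d b1 (by omega) (by omega)] at h2, Or.inl ?_⟩
      obtain ⟨j, hj1, hj2, hj3, hj4⟩ := h3
      have hjne : j ≠ M + 1 := by omega
      refine ⟨j - 1, by omega, by omega, ?_, ?_⟩
      · rw [← cjoin_mid M b0 d b1 (by omega) hjne]
        convert hj3 using 2
      · intro t ht1 ht2
        have h5 := hj4 (t+1) (by omega) (by omega)
        rw [cjoin_mid M b0 d b1 (by omega) (by omega)] at h5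
        simpa using h5
    · -- B-part
      refine Or.inl ⟨by omega, by rwa [cjoin_mid M b0 d b1 (by omega) (by omega)] at h2, Or.inr ?_⟩
      rw [hz] at h3
      split at h3 <;> omega
    · omega
  · rintro (⟨h1, h2, h3 | h3⟩ | ⟨h1, _⟩)
    · refine Or.inl ⟨by omega, by rw [cjoin_mid M b0 d b1 (by omega) (by omega)]; simpa using h2,
        Or.inl ?_⟩
      obtain ⟨j, hj1, hj2, hj3, hj4⟩ := h3
      refine ⟨j + 1, by omega, by omega, ?_, ?_⟩
      · rw [cjoin_mid M b0 d b1 (by omega) (by omega)]; simpa using hj3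
      · intro t ht1 ht2
        rw [cjoin_mid M b0 d b1 (by omega) (by omega)]
        have := hj4 (t-1) (by omega) (by omega)
        convert this using 2
    · refine Or.inl ⟨by omega, by rw [cjoin_mid M b0 d b1 (by omega) (by omega)]; simpa using h2,
        Or.inr ?_⟩
      rw [hz]
      have : zf d i ≠ 0 ∨ zf d i = 0 := by omega
      rcases this with h' | h'
      · rw [if_pos (Or.inr h')]; omega
      · rw [h'] at h3; omega
    · omega

lemma QP_join_zero (M : ℕ) (b0 : Bool) (d : ℕ → Bool) (b1 : Bool) :
    QP (M + 4) (cjoin M b0 d b1) 0 ↔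
      (b0 = false ∧ (b1 = true ∨ zf d M ≠ 0)) := by
  have hc0 : cjoin M b0 d b1 0 = b0 := by simp [cjoin]
  constructor
  · rintro (⟨_, h2, h3 | h3⟩ | ⟨h1, _⟩)
    · refine ⟨by rwa [hc0] at h2, ?_⟩
      obtain ⟨j, hj1, hj2, hj3, _⟩ := h3
      by_cases hj : j = M + 1
      · subst hj
        left
        rwa [cjoin_top] at hj3
      · right
        rw [cjoin_mid M b0 d b1 (by omega) hj] at hj3
        intro hzero
        rw [zf_zero_iff] at hzero
        rw [hzero (j-1) (by omega)] at hj3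
        exact Bool.false_ne_true hj3
    · exfalso
      have : zf (cjoin M b0 d b1) 0 = 0 := rfl
      omega
    · omega
  · rintro ⟨hb0, hex⟩
    have hex' : ∃ j, 0 < j ∧ j < M + 2 ∧ cjoin M b0 d b1 j = true := by
      rcases hex with hb1 | hzd
      · exact ⟨M + 1, by omega, by omega, by rw [cjoin_top]; exact hb1⟩
      · have : ¬ ∀ s < M, d s = false := by
          intro hall; exact hzd ((zf_zero_iff d M).2 hall)
        push_neg at this
        obtain ⟨s, hs, hds⟩ := this
        exact ⟨s + 1, by omega, by omega,
          by rw [cjoin_mid M b0 d b1 (by omega) (by omega)]; simpa using hds⟩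
    obtain ⟨j, hj1, hj2, hj3, hj4⟩ := exists_run_of_exists hex'
    exact Or.inl ⟨by omega, by rwa [hc0], Or.inl ⟨j, hj1, by omega, hj3, hj4⟩⟩

lemma QP_join_topm1 (M : ℕ) (b0 : Bool) (d : ℕ → Bool) (b1 : Bool) :
    QP (M + 4) (cjoin M b0 d b1) (M + 1) ↔ (b1 = false ∧ zf d M ≠ 0) := by
  have hz := zf_join M b0 d b1 M le_rfl
  have hzd := zf_le d M
  have hc : cjoin M b0 d b1 (M + 1) = b1 := cjoin_top M b0 d b1
  constructor
  · rintro (⟨_, h2, h3 | h3⟩ | ⟨h1, _⟩)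
    · obtain ⟨j, hj1, hj2, _, _⟩ := h3; omega
    · refine ⟨by rwa [hc] at h2, ?_⟩
      rw [hz] at h3
      split at h3 <;> omega
    · omega
  · rintro ⟨hb1, hzd0⟩
    refine Or.inl ⟨by omega, by rwa [hc], Or.inr ?_⟩
    rw [hz, if_pos (Or.inr hzd0)]
    omega

lemma QP_join_top (M : ℕ) (b0 : Bool) (d : ℕ → Bool) (b1 : Bool) :
    QP (M + 4) (cjoin M b0 d b1) (M + 2) ↔
      (b1 = true ∨ b0 = true ∨ zf d M ≠ 0) := by
  have hz := zf_join_top M b0 d b1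
  have hzd := zf_le d M
  have hn2 : M + 4 - 2 = M + 2 := by omega
  constructor
  · rintro (⟨h1, _, _⟩ | ⟨_, h2⟩)
    · omega
    · rw [hn2, hz] at h2
      split at h2
      · left; assumption
      · split at h2
        · rename_i h _; tauto
        · omega
  · intro h
    refine Or.inr ⟨by omega, ?_⟩
    rw [hn2, hz]
    rcases h with h | h | h
    · rw [if_pos h]; omega
    · split
      · omega
      · rw [if_pos (Or.inl h)]; omega
    · split
      · omega
      · rw [if_pos (Or.inr h)]; omega

lemma QP_d_top (M : ℕ) (d : ℕ → Bool) :
    QP (M + 2) d M ↔ zf d M ≠ 0 := by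
  have hn2 : M + 2 - 2 = M := by omega
  constructor
  · rintro (⟨h1, _, _⟩ | ⟨_, h2⟩)
    · omega
    · rw [hn2] at h2; omega
  · intro h
    exact Or.inr ⟨by omega, by rw [hn2]; omega⟩

lemma G_join (M : ℕ) (b0 : Bool) (d : ℕ → Bool) (b1 : Bool) :
    G (M + 4) (cjoin M b0 d b1) = G (M + 2) d +
      (if zf d M = 0 then (if b0 then 1 else if b1 then 2 else 0)
       else ((if b0 then 0 else 1) + (if b1 then 0 else 1))) := by
  classical
  have hrange4 : M + 4 - 1 = M + 3 := by omega
  have hrange2 : M + 2 - 1 = M + 1 := by omega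
  have e1 : G (M + 4) (cjoin M b0 d b1) =
      ∑ i ∈ Finset.range (M + 3), (if QP (M + 4) (cjoin M b0 d b1) i then 1 else 0) := by
    rw [G, hrange4, Finset.card_filter]
  have e2 : G (M + 2) d =
      ∑ i ∈ Finset.range (M + 1), (if QP (M + 2) d i then 1 else 0) := by
    rw [G, hrange2, Finset.card_filter]
  rw [e1, e2]
  rw [Finset.sum_range_succ, Finset.sum_range_succ' _ (M + 1)]
  rw [Finset.sum_range_succ (n := M), Finset.sum_range_succ (n := M)]
  have hmid : ∀ i ∈ Finset.range M,
      (if QP (M + 4) (cjoin M b0 d b1) (i + 1) then (1:ℕ) else 0) =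
      (if QP (M + 2) d i then 1 else 0) := by
    intro i hi
    rw [Finset.mem_range] at hi
    simp only [QP_join_mid M b0 d b1 hi]
  rw [Finset.sum_congr rfl hmid]
  have h0 := QP_join_zero M b0 d b1
  have ht1 := QP_join_topm1 M b0 d b1
  have ht2 := QP_join_top M b0 d b1
  have hdt := QP_d_top M d
  by_cases hs : zf d M = 0 <;> cases b0 <;> cases b1 <;>
    simp only [h0, ht1, ht2, hdt, hs, if_pos, if_neg] <;> simp [hs] <;> try omega


/-! ### Counting strings by G -/

def extendB {L : ℕ} (c : Fin L → Bool) : ℕ → Bool :=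
  fun t => if h : t < L then c ⟨t, h⟩ else false

lemma extendB_lt {L : ℕ} (c : Fin L → Bool) {t : ℕ} (h : t < L) :
    extendB c t = c ⟨t, h⟩ := dif_pos h

lemma G_two (c : ℕ → Bool) : G 2 c = 0 := by
  have h : ¬ QP 2 c 0 := by
    have hz : zf c 0 = 0 := rfl
    rintro (⟨h1, _, _⟩ | ⟨_, h2⟩)
    · omega
    · rw [show (2:ℕ) - 2 = 0 from rfl, hz] at h2; omega
  rw [G]
  norm_num
  exact h

lemma G_three (c : ℕ → Bool) : G 3 c = if c 0 then 1 else 0 := by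
  have hz0 : zf c 0 = 0 := rfl
  have hz1 : zf c 1 = if c 0 then 1 else 0 := by simp [zf]
  have h0 : ¬ QP 3 c 0 := by
    rintro (⟨_, _, ⟨j, hj1, hj2, _, _⟩ | h3⟩ | ⟨h1, _⟩)
    · omega
    · rw [hz0] at h3; omega
    · omega
  have h1 : QP 3 c 1 ↔ c 0 = true := by
    constructor
    · rintro (⟨h1, _, _⟩ | ⟨_, h2⟩)
      · omega
      · rw [show (3:ℕ) - 2 = 1 from rfl, hz1] at h2
        by_cases hc : c 0 = true
        · exact hc
        · rw [if_neg hc] at h2; omega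
    · intro hc
      refine Or.inr ⟨rfl, ?_⟩
      rw [show (3:ℕ) - 2 = 1 from rfl, hz1, if_pos hc]
  rw [G]
  norm_num
  rw [Finset.card_filter, Finset.sum_range_succ, Finset.sum_range_succ,
    Finset.sum_range_zero]
  rw [if_neg h0]
  by_cases hc : c 0 = true
  · rw [if_pos (h1.2 hc), if_pos hc]
  · rw [if_neg (fun h => hc (h1.1 h)), if_neg hc]

def joinB (M : ℕ) (b0 b1 : Bool) (d : Fin M → Bool) : Fin (M + 2) → Bool :=
  fun i => cjoin M b0 (extendB d) b1 (i : ℕ)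

lemma joinB_val (M : ℕ) (b0 b1 : Bool) (d : Fin M → Bool) (t : ℕ) (h : t < M + 2) :
    joinB M b0 b1 d ⟨t, h⟩ = cjoin M b0 (extendB d) b1 t := rfl

def splitJoin (M : ℕ) : (Bool × Bool × (Fin M → Bool)) ≃ (Fin (M + 2) → Bool) where
  toFun := fun x => joinB M x.1 x.2.1 x.2.2
  invFun := fun c => (c ⟨0, by omega⟩, c ⟨M + 1, by omega⟩,
    fun j => c ⟨(j : ℕ) + 1, by have := j.isLt; omega⟩)
  left_inv := by
    rintro ⟨b0, b1, d⟩
    refine Prod.ext ?_ (Prod.ext ?_ ?_)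
    · show cjoin M b0 (extendB d) b1 0 = b0
      exact cjoin_zero M b0 (extendB d) b1
    · show cjoin M b0 (extendB d) b1 (M + 1) = b1
      exact cjoin_top M b0 (extendB d) b1
    · funext j
      show cjoin M b0 (extendB d) b1 ((j : ℕ) + 1) = d j
      rw [cjoin_mid M b0 (extendB d) b1 (by omega) (by have := j.isLt; omega)]
      rw [show (j : ℕ) + 1 - 1 = (j : ℕ) from rfl, extendB_lt d j.isLt]
  right_inv := by
    intro c
    funext i
    rcases i with ⟨iv, hiv⟩
    dsimp only
    rw [joinB_val]
    by_cases h0 : iv = 0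
    · subst h0; rw [cjoin_zero]
    · by_cases h1 : iv = M + 1
      · subst h1; rw [cjoin_top]
      · rw [cjoin_mid M _ _ _ h0 h1, extendB_lt _ (show iv - 1 < M by omega)]
        congr 1
        apply Fin.ext
        show iv - 1 + 1 = iv
        omega

theorem count_G (L : ℕ) : ∀ k : ℕ,
    ((Finset.univ : Finset (Fin L → Bool)).filter
      (fun c => G (L + 2) (extendB c) = k)).card = Nat.choose L k := by
  induction L using Nat.strong_induction_on with
  | _ L ih =>
  intro k
  match L with
  | 0 =>
    rw [show (0:ℕ) + 2 = 2 from rfl]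
    rcases k with _ | k
    · rw [Nat.choose_self]
      rw [Finset.filter_true_of_mem (fun c _ => G_two (extendB c))]
      simp [Finset.card_univ]
    · rw [Nat.choose_eq_zero_of_lt (by omega)]
      rw [Finset.card_eq_zero, Finset.filter_eq_empty_iff]
      intro c _
      rw [G_two]
      omega
  | 1 =>
    rw [show (1:ℕ) + 2 = 3 from rfl]
    rw [Finset.card_filter]
    rw [← Equiv.sum_comp (Equiv.funUnique (Fin 1) Bool).symm
      (fun c => if G 3 (extendB c) = k then (1:ℕ) else 0)]
    rw [Fintype.sum_bool]
    have hv : ∀ b : Bool, G 3 (extendB ((Equiv.funUnique (Fin 1) Bool).symm b)) =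
        if b then 1 else 0 := by
      intro b
      rw [G_three, extendB_lt _ (show (0:ℕ) < 1 by omega)]
      rfl
    rw [hv true, hv false]
    rcases k with _ | _ | k <;> simp [Nat.choose]
  | (M + 2) =>
    rw [Finset.card_filter]
    rw [← Equiv.sum_comp (splitJoin M)
      (fun c => if G (M + 2 + 2) (extendB c) = k then (1:ℕ) else 0)]
    have hkey : ∀ x : Bool × Bool × (Fin M → Bool),
        (if G (M + 2 + 2) (extendB ((splitJoin M) x)) = k then (1:ℕ) else 0) =
        (if G (M + 2) (extendB x.2.2) +
            (if zf (extendB x.2.2) M = 0 then (if x.1 then 1 else if x.2.1 then 2 else 0)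
             else ((if x.1 then 0 else 1) + (if x.2.1 then 0 else 1))) = k then (1:ℕ) else 0) := by
      rintro ⟨b0, b1, d⟩
      congr 1
      rw [show M + 2 + 2 = M + 4 from by omega]
      rw [← G_join M b0 (extendB d) b1]
      simp only [eq_iff_iff]
      constructor <;> intro h <;> rw [← h] <;> [skip; skip] <;>
        · apply G_congr
          intro t ht
          have ht' : t < M + 2 := by omega
          rw [extendB_lt _ ht']
          rfl
    rw [Finset.sum_congr rfl (fun x _ => hkey x)]
    rw [Fintype.sum_prod_type]
    simp only [Fintype.sum_prod_type]
    rw [Fintype.sum_bool]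
    simp only [Fintype.sum_bool]
    rw [← Finset.sum_add_distrib, ← Finset.sum_add_distrib, ← Finset.sum_add_distrib]
    trans (∑ d : Fin M → Bool, ((if G (M+2) (extendB d) = k then (1:ℕ) else 0) +
          ((if G (M+2) (extendB d) + 1 = k then (1:ℕ) else 0) +
           ((if G (M+2) (extendB d) + 1 = k then (1:ℕ) else 0) +
            (if G (M+2) (extendB d) + 2 = k then (1:ℕ) else 0)))))
    · apply Finset.sum_congr rfl
      intro d _
      by_cases hs : zf (extendB d) M = 0 <;>
        by_cases h1 : G (M+2) (extendB d) = k <;>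
        by_cases h2 : G (M+2) (extendB d) + 1 = k <;>
        by_cases h3 : G (M+2) (extendB d) + 2 = k <;>
        simp [hs, h1, h2, h3]
    rw [Finset.sum_add_distrib, Finset.sum_add_distrib, Finset.sum_add_distrib]
    rw [← Finset.card_filter, ← Finset.card_filter, ← Finset.card_filter]
    rw [ih M (by omega) k]
    rcases k with _ | _ | k
    · rw [Finset.filter_false_of_mem (fun d _ => by omega),
        Finset.filter_false_of_mem (fun d _ => by omega)]
      simp
    · rw [Finset.filter_congr (fun d _ => show (G (M+2) (extendB d) + 1 = 1) ↔
          (G (M+2) (extendB d) = 0) from by omega),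
        Finset.filter_false_of_mem (s := Finset.univ)
          (p := fun d : Fin M → Bool => G (M+2) (extendB d) + 2 = 1) (fun d _ => by omega)]
      rw [ih M (by omega) 0]
      simp [Nat.choose]
      omega
    · rw [Finset.filter_congr (fun d _ => show (G (M+2) (extendB d) + 1 = k + 2) ↔
          (G (M+2) (extendB d) = k + 1) from by omega)]
      rw [Finset.filter_congr (fun d _ => show (G (M+2) (extendB d) + 2 = k + 2) ↔
          (G (M+2) (extendB d) = k) from by omega)]
      rw [ih M (by omega) (k + 1), ih M (by omega) k]
      rw [Nat.choose_succ_succ (M + 1) (k + 1), Nat.choose_succ_succ M (k + 1),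
        Nat.choose_succ_succ M k]
      ring

/-! ### The permutation attached to a choice string -/

def sf (n : ℕ) (c : ℕ → Bool) (i : ℕ) : ℕ :=
  if i + 3 ≤ n then (if c i then n - 1 - zf c i else n - 2 - i)
  else if i + 2 = n then 0
  else n - 1 - zf c (n - 2)

lemma sf_false {n : ℕ} {c : ℕ → Bool} {i : ℕ} (h3 : i + 3 ≤ n) (hc : c i = false) :
    sf n c i = n - 2 - i := by
  unfold sf; rw [if_pos h3, hc]; simp

lemma sf_true {n : ℕ} {c : ℕ → Bool} {i : ℕ} (h3 : i + 3 ≤ n) (hc : c i = true) :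
    sf n c i = n - 1 - zf c i := by
  unfold sf; rw [if_pos h3, hc]; simp

lemma sf_pen {n : ℕ} {c : ℕ → Bool} (hn : 2 ≤ n) : sf n c (n - 2) = 0 := by
  unfold sf; rw [if_neg (by omega), if_pos (by omega)]

lemma sf_last {n : ℕ} {c : ℕ → Bool} (hn : 2 ≤ n) : sf n c (n - 1) = n - 1 - zf c (n - 2) := by
  unfold sf; rw [if_neg (by omega), if_neg (by omega)]

lemma sf_lt {n : ℕ} (hn : 2 ≤ n) (c : ℕ → Bool) {i : ℕ} (hi : i < n) : sf n c i < n := by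
  have h1 := zf_le c i
  have h2 := zf_le c (n - 2)
  unfold sf
  split
  · split <;> omega
  · split <;> omega

lemma false_val_ne {n : ℕ} {c : ℕ → Bool} {i t : ℕ} (hi3 : i + 3 ≤ n) (hci : c i = false)
    (ht : t ≤ n - 2) (h : n - 2 - i = n - 1 - zf c t) : False := by
  have hz := zf_le c t
  have hzi : zf c t = i + 1 := by omega
  have h2 := c_pred_zf c (t := t) (by omega)
  rw [hzi, Nat.add_sub_cancel, hci] at h2
  exact Bool.false_ne_true h2

lemma sf_inj {n : ℕ} (hn : 2 ≤ n) (c : ℕ → Bool) :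
    ∀ {i j : ℕ}, i < n → j < n → sf n c i = sf n c j → i = j := by
  have key : ∀ {i j : ℕ}, i < j → j < n → sf n c i = sf n c j → False := by
    intro i j hij hj h
    have hzi := zf_le c i
    have hzj := zf_le c j
    have hzn := zf_le c (n - 2)
    by_cases hi3 : i + 3 ≤ n
    · cases hci : c i with
      | false =>
        rw [sf_false hi3 hci] at h
        by_cases hj3 : j + 3 ≤ n
        · cases hcj : c j with
          | false => rw [sf_false hj3 hcj] at h; omega
          | true =>
            rw [sf_true hj3 hcj] at h
            exact false_val_ne hi3 hci (by omega) h
        · by_cases hj2 : j + 2 = n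
          · rw [show j = n - 2 by omega, sf_pen hn] at h; omega
          · rw [show j = n - 1 by omega, sf_last hn] at h
            exact false_val_ne hi3 hci (by omega) h
      | true =>
        rw [sf_true hi3 hci] at h
        by_cases hj3 : j + 3 ≤ n
        · cases hcj : c j with
          | false =>
            rw [sf_false hj3 hcj] at h
            exact false_val_ne hj3 hcj (by omega) h.symm
          | true =>
            rw [sf_true hj3 hcj] at h
            have h2 := lt_zf c hij hci
            omega
        · by_cases hj2 : j + 2 = n
          · rw [show j = n - 2 by omega, sf_pen hn] at h; omega
          · rw [show j = n - 1 by omega, sf_last hn] at h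
            have h2 := lt_zf c (show i < n - 2 by omega) hci
            omega
    · by_cases hi2 : i + 2 = n
      · -- i = n - 2, so j = n - 1
        rw [show i = n - 2 by omega, sf_pen hn, show j = n - 1 by omega, sf_last hn] at h
        omega
      · omega
  intro i j hi hj h
  rcases lt_trichotomy i j with h' | h' | h'
  · exact absurd (key h' hj h) not_false
  · exact h'
  · exact absurd (key h' hi h.symm) not_false

noncomputable def sigmaP (n : ℕ) (c : ℕ → Bool) (hn : 2 ≤ n) : Equiv.Perm (Fin n) :=
  Equiv.ofBijective (fun i => ⟨sf n c i.val, sf_lt hn c i.isLt⟩)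
    (Finite.injective_iff_bijective.mp (fun i j hij => by
      apply Fin.ext
      exact sf_inj hn c i.isLt j.isLt (by simpa using congrArg Fin.val hij)))

lemma sigmaP_val {n : ℕ} (c : ℕ → Bool) (hn : 2 ≤ n) (i : Fin n) :
    (sigmaP n c hn i : ℕ) = sf n c i.val := rfl

lemma sf_big_true {n : ℕ} {c : ℕ → Bool} (hn : 2 ≤ n) {i : ℕ} (hi3 : i + 3 ≤ n)
    (hci : c i = true) : ∀ j, i < j → j < n → sf n c j < sf n c i := by
  intro j hij hj
  rw [sf_true hi3 hci]
  have hzi := zf_le c i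
  by_cases hj3 : j + 3 ≤ n
  · cases hcj : c j with
    | false => rw [sf_false hj3 hcj]; omega
    | true =>
      rw [sf_true hj3 hcj]
      have h2 := lt_zf c hij hci
      have h3 := zf_le c j
      omega
  · by_cases hj2 : j + 2 = n
    · rw [show j = n - 2 by omega, sf_pen hn]; omega
    · rw [show j = n - 1 by omega, sf_last hn]
      have h2 := lt_zf c (show i < n - 2 by omega) hci
      have h3 := zf_le c (n - 2)
      omega

lemma sf_after_rise {n : ℕ} {c : ℕ → Bool} (hn : 2 ≤ n) {i j k : ℕ} (hij : i < j)
    (hjk : j < k) (hk : k < n) (hrise : sf n c i < sf n c j) : sf n c k < sf n c i := by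
  have hi3 : i + 3 ≤ n := by omega
  have hci : c i = false := by
    cases hci : c i with
    | false => rfl
    | true => exact absurd hrise (not_lt.2 (le_of_lt (sf_big_true hn hi3 hci j hij (by omega))))
  rw [sf_false hi3 hci] at hrise ⊢
  have hj3 : j + 3 ≤ n := by
    by_contra hj3
    have hj2 : j + 2 = n := by omega
    rw [show j = n - 2 by omega, sf_pen hn] at hrise
    omega
  have hcj : c j = true := by
    cases hcj : c j with
    | true => rfl
    | false => rw [sf_false hj3 hcj] at hrise; omega
  by_cases hk3 : k + 3 ≤ n
  · cases hck : c k with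
    | false => rw [sf_false hk3 hck]; omega
    | true =>
      rw [sf_true hk3 hck]
      have h2 := lt_zf c hjk hcj
      omega
  · by_cases hk2 : k + 2 = n
    · rw [show k = n - 2 by omega, sf_pen hn]; omega
    · rw [show k = n - 1 by omega, sf_last hn]
      have h2 := lt_zf c (show j < n - 2 by omega) hcj
      omega

/-- Characterization of the rises of `sf`. -/
lemma rise_char {n : ℕ} {c : ℕ → Bool} (hn : 2 ≤ n) {i j : ℕ} (hij : i < j) (hj : j < n)
    (hrise : sf n c i < sf n c j) :
    (i + 3 ≤ n ∧ c i = false ∧ j + 3 ≤ n ∧ c j = true ∧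
        (∀ t, i < t → t < j → c t = false) ∧ zf c j = zf c i) ∨
    (i + 3 ≤ n ∧ c i = false ∧ j = n - 1 ∧ zf c (n - 2) = zf c i) ∨
    (i + 2 = n ∧ j = n - 1) := by
  by_cases hi3 : i + 3 ≤ n
  · have hci : c i = false := by
      cases hci : c i with
      | false => rfl
      | true => exact absurd hrise (not_lt.2 (le_of_lt (sf_big_true hn hi3 hci j hij hj)))
    rw [sf_false hi3 hci] at hrise
    by_cases hj3 : j + 3 ≤ n
    · have hcj : c j = true := by
        cases hcj : c j with
        | true => rfl
        | false => rw [sf_false hj3 hcj] at hrise; omega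
      rw [sf_true hj3 hcj] at hrise
      have hzj := zf_le c j
      have hzle : zf c j ≤ i := by omega
      have hrun : ∀ t, i < t → t < j → c t = false := by
        intro t ht1 ht2
        exact c_eq_false_of c (by omega) ht2
      have hzz : zf c j = zf c i := by
        apply zf_run c (by omega)
        intro s hs1 hs2
        rcases Nat.eq_or_lt_of_le hs1 with h' | h'
        · rw [← h']; exact hci
        · exact hrun s h' hs2
      exact Or.inl ⟨hi3, hci, hj3, hcj, hrun, hzz⟩
    · by_cases hj2 : j + 2 = n
      · rw [show j = n - 2 by omega, sf_pen hn] at hrise; omega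
      · have hje : j = n - 1 := by omega
        rw [hje, sf_last hn] at hrise
        have hzn := zf_le c (n - 2)
        have hzle : zf c (n - 2) ≤ i := by omega
        have hzz : zf c (n - 2) = zf c i := by
          apply zf_run c (by omega)
          intro s hs1 hs2
          rcases Nat.eq_or_lt_of_le hs1 with h' | h'
          · rw [← h']; exact hci
          · exact c_eq_false_of c (by omega) hs2
        exact Or.inr (Or.inl ⟨hi3, hci, hje, hzz⟩)
  · by_cases hi2 : i + 2 = n
    · have hje : j = n - 1 := by omega
      exact Or.inr (Or.inr ⟨hi2, hje⟩)
    · omega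

/-! ### Pattern machinery -/

/-- From a triple with two rises we can build a forbidden pattern. -/
lemma contains_of_triple {n : ℕ} (σ : Equiv.Perm (Fin n)) {x y z : Fin n}
    (hxy : x < y) (hyz : y < z) (r1 : σ x < σ y) (r2 : σ x < σ z) :
    Contains σ p123 ∨ Contains σ p132 := by
  set f : Fin 3 → Fin n := fun a => if a = 0 then x else if a = 1 then y else z with hf
  have hf0 : f 0 = x := rfl
  have hf1 : f 1 = y := rfl
  have hf2 : f 2 = z := rfl
  have hmono : StrictMono f := by
    intro a b hab
    fin_cases a <;> fin_cases b <;>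
      simp only [hf0, hf1, hf2] <;>
      first
        | exact absurd hab (by decide)
        | exact hxy
        | exact hyz
        | exact lt_trans hxy hyz
  by_cases ho : σ y < σ z
  · left
    refine ⟨f, hmono, ?_⟩
    intro u v
    fin_cases u <;> fin_cases v <;> simp only [hf0, hf1, hf2]
    · exact iff_of_false (lt_irrefl _) (by decide)
    · exact iff_of_true r1 (by decide)
    · exact iff_of_true r2 (by decide)
    · exact iff_of_false (asymm r1) (by decide)
    · exact iff_of_false (lt_irrefl _) (by decide)
    · exact iff_of_true ho (by decide)
    · exact iff_of_false (asymm r2) (by decide)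
    · exact iff_of_false (asymm ho) (by decide)
    · exact iff_of_false (lt_irrefl _) (by decide)
  · right
    have hne : σ y ≠ σ z := fun h => (by omega : ¬ (y:ℕ) = z) (by
      have := σ.injective h
      exact congrArg Fin.val this)
    have ho' : σ z < σ y := lt_of_le_of_ne (not_lt.1 ho) (fun h => hne h.symm)
    refine ⟨f, hmono, ?_⟩
    intro u v
    fin_cases u <;> fin_cases v <;> simp only [hf0, hf1, hf2]
    · exact iff_of_false (lt_irrefl _) (by decide)
    · exact iff_of_true r1 (by decide)
    · exact iff_of_true r2 (by decide)
    · exact iff_of_false (asymm r1) (by decide)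
    · exact iff_of_false (lt_irrefl _) (by decide)
    · exact iff_of_false (asymm ho') (by decide)
    · exact iff_of_false (asymm r2) (by decide)
    · exact iff_of_true ho' (by decide)
    · exact iff_of_false (lt_irrefl _) (by decide)

/-- Permutations avoiding 123 and 132 have at most one later larger element. -/
lemma at_most_one_rise {n : ℕ} {σ : Equiv.Perm (Fin n)} (hA : Avoids σ p123)
    (hB : Avoids σ p132) {x y z : Fin n} (hxy : x < y) (hxz : x < z) (hyz : y ≠ z)
    (r1 : σ x < σ y) (r2 : σ x < σ z) : False := by
  rcases hyz.lt_or_gt with h | h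
  · rcases contains_of_triple σ hxy h r1 r2 with hc | hc
    · exact hA hc
    · exact hB hc
  · rcases contains_of_triple σ hxz h r2 r1 with hc | hc
    · exact hA hc
    · exact hB hc

lemma sigmaP_avoids {n : ℕ} (c : ℕ → Bool) (hn : 2 ≤ n) :
    Avoids (sigmaP n c hn) p123 ∧ Avoids (sigmaP n c hn) p132 := by
  have key : ¬ (Contains (sigmaP n c hn) p123 ∨ Contains (sigmaP n c hn) p132) := by
    rintro (⟨f, hmono, hiff⟩ | ⟨f, hmono, hiff⟩)
    · have h01 : f 0 < f 1 := hmono (show (0 : Fin 3) < 1 by decide)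
      have h12 : f 1 < f 2 := hmono (show (1 : Fin 3) < 2 by decide)
      have r1 : sigmaP n c hn (f 0) < sigmaP n c hn (f 1) := (hiff 0 1).2 (by decide)
      have r2 : sigmaP n c hn (f 0) < sigmaP n c hn (f 2) := (hiff 0 2).2 (by decide)
      have e0 : ((sigmaP n c hn (f 0)) : ℕ) = sf n c ((f 0) : ℕ) := rfl
      have e1 : ((sigmaP n c hn (f 1)) : ℕ) = sf n c ((f 1) : ℕ) := rfl
      have e2 : ((sigmaP n c hn (f 2)) : ℕ) = sf n c ((f 2) : ℕ) := rfl
      have hr1 : sf n c ((f 0) : ℕ) < sf n c ((f 1) : ℕ) := by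
        have := Fin.lt_def.1 r1; omega
      have hlt : sf n c (f 2).val < sf n c (f 0).val :=
        sf_after_rise hn (Fin.lt_def.1 h01) (Fin.lt_def.1 h12) (f 2).isLt hr1
      exact absurd (Fin.lt_def.1 r2) (by omega)
    · have h01 : f 0 < f 1 := hmono (show (0 : Fin 3) < 1 by decide)
      have h12 : f 1 < f 2 := hmono (show (1 : Fin 3) < 2 by decide)
      have r1 : sigmaP n c hn (f 0) < sigmaP n c hn (f 1) := (hiff 0 1).2 (by decide)
      have r2 : sigmaP n c hn (f 0) < sigmaP n c hn (f 2) := (hiff 0 2).2 (by decide)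
      have e0 : ((sigmaP n c hn (f 0)) : ℕ) = sf n c ((f 0) : ℕ) := rfl
      have e1 : ((sigmaP n c hn (f 1)) : ℕ) = sf n c ((f 1) : ℕ) := rfl
      have e2 : ((sigmaP n c hn (f 2)) : ℕ) = sf n c ((f 2) : ℕ) := rfl
      have hr1 : sf n c ((f 0) : ℕ) < sf n c ((f 1) : ℕ) := by
        have := Fin.lt_def.1 r1; omega
      have hlt : sf n c (f 2).val < sf n c (f 0).val :=
        sf_after_rise hn (Fin.lt_def.1 h01) (Fin.lt_def.1 h12) (f 2).isLt hr1
      exact absurd (Fin.lt_def.1 r2) (by omega)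
  exact ⟨fun h => key (Or.inl h), fun h => key (Or.inr h)⟩

lemma sigmaP_pen {n : ℕ} (c : ℕ → Bool) (hn : 2 ≤ n) :
    (sigmaP n c hn ⟨n - 2, Nat.sub_lt_self (by decide) hn⟩ : ℕ) = 0 := by
  rw [sigmaP_val]
  exact sf_pen hn

lemma rise_of_mem {n : ℕ} (c : ℕ → Bool) (hn : 2 ≤ n) {p : Fin n × Fin n}
    (hp : (p.1 < p.2 ∧ p.2 < sigmaP n c hn p.1 ∧ sigmaP n c hn p.1 < sigmaP n c hn p.2) ∨
      (sigmaP n c hn p.1 < sigmaP n c hn p.2 ∧ sigmaP n c hn p.2 ≤ p.1 ∧ p.1 < p.2)) :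
    (p.1 : ℕ) < (p.2 : ℕ) ∧ sf n c p.1 < sf n c p.2 := by
  have e1 : ((sigmaP n c hn p.1) : ℕ) = sf n c p.1 := rfl
  have e2 : ((sigmaP n c hn p.2) : ℕ) = sf n c p.2 := rfl
  rcases hp with ⟨h1, _, h3⟩ | ⟨h3, _, h1⟩ <;>
    · have a1 := Fin.lt_def.1 h1
      have a3 := Fin.lt_def.1 h3
      exact ⟨a1, by omega⟩

theorem crs_sigmaP {n : ℕ} (c : ℕ → Bool) (hn : 2 ≤ n) :
    crs (sigmaP n c hn) = G n c := by
  rw [crs, G]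
  apply Finset.card_bij (fun p _ => ((p.1 : Fin n) : ℕ))
  · -- maps into the QP filter
    intro p hp
    rw [Finset.mem_filter] at hp
    have hx := hp.2
    have e1 : ((sigmaP n c hn p.1) : ℕ) = sf n c p.1 := rfl
    have e2 : ((sigmaP n c hn p.2) : ℕ) = sf n c p.2 := rfl
    have hlt : (p.1 : ℕ) < (p.2 : ℕ) := by
      rcases hx with ⟨h1, _, _⟩ | ⟨_, _, h1⟩ <;> exact Fin.lt_def.1 h1
    have hrise : sf n c p.1 < sf n c p.2 := by
      rcases hx with ⟨_, _, h3⟩ | ⟨h3, _, _⟩ <;> (have := Fin.lt_def.1 h3; omega)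
    rw [Finset.mem_filter, Finset.mem_range]
    have hj := p.2.isLt
    refine ⟨by omega, ?_⟩
    rcases rise_char hn hlt p.2.isLt hrise with
      ⟨hi3, hci, hj3, hcj, hrun, hzz⟩ | ⟨hi3, hci, hje, hzz⟩ | ⟨hi2, hje⟩
    · rcases hx with ⟨_, h2, _⟩ | ⟨_, h2, _⟩
      · -- type A crossing
        have h2' : (p.2 : ℕ) < sf n c p.1 := by have := Fin.lt_def.1 h2; omega
        rw [sf_false hi3 hci] at h2'
        exact Or.inl ⟨hi3, hci, Or.inl ⟨p.2, hlt, by omega, hcj, hrun⟩⟩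
      · have h2' : sf n c p.2 ≤ (p.1 : ℕ) := by have := Fin.le_def.1 h2; omega
        rw [sf_true hj3 hcj, hzz] at h2'
        have := zf_le c p.1
        exact Or.inl ⟨hi3, hci, Or.inr (by omega)⟩
    · rcases hx with ⟨_, h2, _⟩ | ⟨_, h2, _⟩
      · have h2' : (p.2 : ℕ) < sf n c p.1 := by have := Fin.lt_def.1 h2; omega
        rw [sf_false hi3 hci] at h2'
        omega
      · have h2' : sf n c p.2 ≤ (p.1 : ℕ) := by have := Fin.le_def.1 h2; omega
        rw [show ((p.2 : Fin n) : ℕ) = n - 1 from hje, sf_last hn, hzz] at h2'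
        have := zf_le c p.1
        exact Or.inl ⟨hi3, hci, Or.inr (by omega)⟩
    · rcases hx with ⟨_, h2, _⟩ | ⟨_, h2, _⟩
      · have h2' : (p.2 : ℕ) < sf n c p.1 := by have := Fin.lt_def.1 h2; omega
        rw [show ((p.1 : Fin n) : ℕ) = n - 2 by omega, sf_pen hn] at h2'
        omega
      · have h2' : sf n c p.2 ≤ (p.1 : ℕ) := by have := Fin.le_def.1 h2; omega
        rw [show ((p.2 : Fin n) : ℕ) = n - 1 from hje, sf_last hn] at h2'
        have := zf_le c (n - 2)
        exact Or.inr ⟨hi2, by omega⟩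
  · -- injective
    intro p hp q hq heq
    rw [Finset.mem_filter] at hp hq
    obtain ⟨hlt1, hr1⟩ := rise_of_mem c hn hp.2
    obtain ⟨hlt2, hr2⟩ := rise_of_mem c hn hq.2
    have h1 : p.1 = q.1 := Fin.ext heq
    have h2 : p.2 = q.2 := by
      rcases lt_trichotomy ((p.2 : Fin n) : ℕ) ((q.2 : Fin n) : ℕ) with h | h | h
      · exfalso
        have := sf_after_rise hn hlt1 h q.2.isLt hr1
        rw [heq] at this
        omega
      · exact Fin.ext h
      · exfalso
        have := sf_after_rise hn hlt2 h p.2.isLt hr2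
        rw [heq] at hr1
        omega
    exact Prod.ext h1 h2
  · -- surjective
    intro v hv
    rw [Finset.mem_filter, Finset.mem_range] at hv
    obtain ⟨hv1, hq⟩ := hv
    rcases hq with ⟨hi3, hci, hA | hB⟩ | ⟨hv2, hz1⟩
    · obtain ⟨j, hij, hsum, hcj, hrun⟩ := hA
      have hj3 : j + 3 ≤ n := by omega
      have hzz : zf c j = zf c v := by
        apply zf_run c (by omega)
        intro s hs1 hs2
        rcases Nat.eq_or_lt_of_le hs1 with h' | h'
        · rw [← h']; exact hci
        · exact hrun s h' hs2
      have hzv := zf_le c v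
      refine ⟨(⟨v, by omega⟩, ⟨j, by omega⟩), Finset.mem_filter.mpr ⟨Finset.mem_univ _,
        Or.inl ⟨Fin.mk_lt_mk.2 hij, ?_, ?_⟩⟩, rfl⟩
      · rw [Fin.lt_def]
        show j < sf n c v
        rw [sf_false hi3 hci]
        omega
      · rw [Fin.lt_def]
        show sf n c v < sf n c j
        rw [sf_false hi3 hci, sf_true hj3 hcj, hzz]
        omega
    · have hzv := zf_le c v
      by_cases hex : ∃ j, v < j ∧ j + 3 ≤ n ∧ c j = true
      · set jj := Nat.find hex with hjj
        obtain ⟨hj1, hj2, hj3⟩ := Nat.find_spec hex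
        have hzz : zf c jj = zf c v := by
          apply zf_run c (by omega)
          intro s hs1 hs2
          rcases Nat.eq_or_lt_of_le hs1 with h' | h'
          · rw [← h']; exact hci
          · have hmin := Nat.find_min hex hs2
            cases hcs : c s with
            | false => rfl
            | true => exact absurd ⟨h', by omega, hcs⟩ hmin
        refine ⟨(⟨v, by omega⟩, ⟨jj, by omega⟩), Finset.mem_filter.mpr ⟨Finset.mem_univ _,
          Or.inr ⟨?_, ?_, Fin.mk_lt_mk.2 hj1⟩⟩, rfl⟩
        · rw [Fin.lt_def]
          show sf n c v < sf n c jj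
          rw [sf_false hi3 hci, sf_true hj2 hj3, hzz]
          omega
        · rw [Fin.le_def]
          show sf n c jj ≤ v
          rw [sf_true hj2 hj3, hzz]
          omega
      · push_neg at hex
        have hzz : zf c (n - 2) = zf c v := by
          apply zf_run c (by omega)
          intro s hs1 hs2
          rcases Nat.eq_or_lt_of_le hs1 with h' | h'
          · rw [← h']; exact hci
          · have := hex s h' (by omega)
            simpa using this
        refine ⟨(⟨v, by omega⟩, ⟨n - 1, by omega⟩), Finset.mem_filter.mpr ⟨Finset.mem_univ _,
          Or.inr ⟨?_, ?_, Fin.mk_lt_mk.2 (by omega)⟩⟩, rfl⟩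
        · rw [Fin.lt_def]
          show sf n c v < sf n c (n - 1)
          rw [sf_false hi3 hci, sf_last hn, hzz]
          omega
        · rw [Fin.le_def]
          show sf n c (n - 1) ≤ v
          rw [sf_last hn, hzz]
          omega
    · have hv2' : v = n - 2 := by omega
      subst hv2'
      have hzn := zf_le c (n - 2)
      refine ⟨(⟨n - 2, by omega⟩, ⟨n - 1, by omega⟩), Finset.mem_filter.mpr ⟨Finset.mem_univ _,
        Or.inr ⟨?_, ?_, Fin.mk_lt_mk.2 (by omega)⟩⟩, rfl⟩
      · rw [Fin.lt_def]
        show sf n c (n - 2) < sf n c (n - 1)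
        rw [sf_pen hn, sf_last hn]
        omega
      · rw [Fin.le_def]
        show sf n c (n - 1) ≤ n - 2
        rw [sf_last hn]
        omega

/-! ### Surjectivity: every avoider with σ(n-2)=0 comes from a string -/

lemma count_big {n : ℕ} (σ : Equiv.Perm (Fin n)) (w : Fin n) :
    (Finset.univ.filter (fun j : Fin n => w ≤ σ j)).card = n - (w : ℕ) := by
  rw [← Fin.card_Ici (a := w)]
  apply Finset.card_bij (fun j _ => σ j)
  · intro j hj
    rw [Finset.mem_filter] at hj
    exact Finset.mem_Ici.mpr hj.2
  · intro j _ j' _ h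
    exact σ.injective h
  · intro v hv
    exact ⟨σ.symm v, Finset.mem_filter.mpr ⟨Finset.mem_univ _, by
      rw [Equiv.apply_symm_apply]; exact Finset.mem_Ici.mp hv⟩, Equiv.apply_symm_apply σ v⟩

lemma count_lt_rises {n : ℕ} (σ : Equiv.Perm (Fin n)) (i : Fin n) :
    (Finset.univ.filter (fun j : Fin n => σ i < σ j)).card = n - 1 - (σ i : ℕ) := by
  rw [← Fin.card_Ioi (a := σ i)]
  apply Finset.card_bij (fun j _ => σ j)
  · intro j hj
    rw [Finset.mem_filter] at hj
    exact Finset.mem_Ioi.mpr hj.2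
  · intro j _ j' _ h
    exact σ.injective h
  · intro v hv
    exact ⟨σ.symm v, Finset.mem_filter.mpr ⟨Finset.mem_univ _, by
      rw [Equiv.apply_symm_apply]; exact Finset.mem_Ioi.mp hv⟩, Equiv.apply_symm_apply σ v⟩

lemma count_small {n : ℕ} (w : Fin n) :
    (Finset.univ.filter (fun j : Fin n => j < w)).card = (w : ℕ) := by
  rw [← Fin.card_Iio (b := w)]
  congr 1
  ext j
  simp [Finset.mem_Iio]

lemma lower_bound {n : ℕ} {σ : Equiv.Perm (Fin n)} (hA : Avoids σ p123)
    (hB : Avoids σ p132) (i : Fin n) : n - 2 - (i : ℕ) ≤ (σ i : ℕ) := by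
  have hS := count_lt_rises σ i
  have hsub : Finset.univ.filter (fun j : Fin n => σ i < σ j) ⊆
      (Finset.univ.filter (fun j : Fin n => j < i)) ∪
      (Finset.univ.filter (fun j : Fin n => i < j ∧ σ i < σ j)) := by
    intro j hj
    rw [Finset.mem_filter] at hj
    rw [Finset.mem_union, Finset.mem_filter, Finset.mem_filter]
    rcases lt_trichotomy j i with h | h | h
    · exact Or.inl ⟨Finset.mem_univ _, h⟩
    · exfalso; rw [h] at hj; exact lt_irrefl _ hj.2
    · exact Or.inr ⟨Finset.mem_univ _, h, hj.2⟩
  have h1 := count_small i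
  have h2 : (Finset.univ.filter (fun j : Fin n => i < j ∧ σ i < σ j)).card ≤ 1 := by
    rw [Finset.card_le_one]
    intro a ha b hb
    rw [Finset.mem_filter] at ha hb
    by_contra hab
    exact at_most_one_rise hA hB ha.2.1 hb.2.1 hab ha.2.2 hb.2.2
  have h3 := Finset.card_le_card hsub
  have h4 := Finset.card_union_le (Finset.univ.filter (fun j : Fin n => j < i))
    (Finset.univ.filter (fun j : Fin n => i < j ∧ σ i < σ j))
  have h5 := (σ i).isLt
  have h6 := i.isLt
  omega

noncomputable def recC {n : ℕ} (σ : Equiv.Perm (Fin n)) : ℕ → Bool :=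
  fun t => if h : t + 3 ≤ n then decide ((σ ⟨t, by omega⟩ : ℕ) ≠ n - 2 - t) else false

lemma recC_false_iff {n : ℕ} (σ : Equiv.Perm (Fin n)) (u : Fin n) (h3 : (u : ℕ) + 3 ≤ n) :
    recC σ (u : ℕ) = false ↔ (σ u : ℕ) = n - 2 - (u : ℕ) := by
  unfold recC
  rw [dif_pos h3]
  simp [Fin.eta]

lemma recC_true_iff {n : ℕ} (σ : Equiv.Perm (Fin n)) (u : Fin n) (h3 : (u : ℕ) + 3 ≤ n) :
    recC σ (u : ℕ) = true ↔ (σ u : ℕ) ≠ n - 2 - (u : ℕ) := by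
  unfold recC
  rw [dif_pos h3]
  simp [Fin.eta]

theorem sigma_eq_sf {n : ℕ} (hn : 2 ≤ n) (σ : Equiv.Perm (Fin n)) (hA : Avoids σ p123)
    (hB : Avoids σ p132) (h0 : (σ ⟨n - 2, Nat.sub_lt_self (by decide) hn⟩ : ℕ) = 0) (i : Fin n) :
    (σ i : ℕ) = sf n (recC σ) i.val := by
  set c := recC σ with hc
  have hval_run : ∀ u : Fin n, (u : ℕ) + 3 ≤ n → c (u : ℕ) = false →
      (σ u : ℕ) = n - 2 - (u : ℕ) := by
    intro u h3 hf
    exact (recC_false_iff σ u h3).1 hf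
  have hpen : ∀ u : Fin n, (u : ℕ) = n - 2 → (σ u : ℕ) = 0 := by
    intro u hu
    rw [show u = ⟨n - 2, by omega⟩ from Fin.ext (by simpa using hu)]
    exact h0
  by_cases hi3 : i.val + 3 ≤ n
  · cases hci : c i.val with
    | false =>
      rw [sf_false hi3 hci]
      exact hval_run i hi3 hci
    | true =>
      rw [sf_true hi3 hci]
      have hale : zf c i.val ≤ i.val := zf_le c i.val
      set a := zf c i.val with ha
      have hne : (σ i : ℕ) ≠ n - 2 - i.val := (recC_true_iff σ i hi3).1 hci
      have hP1 : n - 2 - i.val ≤ (σ i : ℕ) := lower_bound hA hB i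
      have hσi : n - 1 - i.val ≤ (σ i : ℕ) := by omega
      obtain ⟨p, hσp⟩ : ∃ p : Fin n, (σ p : ℕ) = n - 1 - a :=
        ⟨σ.symm ⟨n - 1 - a, by omega⟩, by rw [Equiv.apply_symm_apply]⟩
      have hp_not_lt : ¬ ((p : ℕ) < a) := by
        intro hlt
        have ha1 : 1 ≤ a := by omega
        have hc1 : c (a - 1) = true := by
          have := c_pred_zf c (t := i.val) (by omega)
          rwa [← ha] at this
        have hP1p := lower_bound hA hB p
        have hpe : (p : ℕ) = a - 1 := by omega
        have hcp : c (p : ℕ) = true := by rw [hpe]; exact hc1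
        have hcontra := (recC_true_iff σ p (by omega)).1 hcp
        apply hcontra
        rw [hσp]
        omega
      have hp_not_mid : ¬ (a ≤ (p : ℕ) ∧ (p : ℕ) < i.val) := by
        rintro ⟨h1, h2⟩
        have hcf : c (p : ℕ) = false := c_eq_false_of c (by omega) h2
        have := hval_run p (by omega) hcf
        rw [hσp] at this
        omega
      by_cases hpi : (p : ℕ) = i.val
      · rw [show p = i from Fin.ext hpi] at hσp
        exact hσp
      · exfalso
        have hpgt : i.val < (p : ℕ) := by omega
        by_cases hai : a < i.val
        · obtain ⟨q, hqv⟩ : ∃ q : Fin n, (q : ℕ) = i.val - 1 := ⟨⟨i.val - 1, by omega⟩, rfl⟩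
          have hcf : c (q : ℕ) = false := by
            rw [hqv]; exact c_eq_false_of c (t := i.val) (by omega) (by omega)
          have hprev : (σ q : ℕ) = n - 1 - i.val := by
            have := hval_run q (by omega) hcf
            rw [this, hqv]
            omega
          have hnev : (σ q : ℕ) ≠ (σ i : ℕ) := by
            intro h
            have : q = i := σ.injective (Fin.ext h)
            have := congrArg Fin.val this
            omega
          rw [hprev] at hnev
          have r1 : σ q < σ i := Fin.lt_def.2 (by rw [hprev]; omega)
          have r2 : σ q < σ p := Fin.lt_def.2 (by rw [hprev, hσp]; omega)
          exact at_most_one_rise hA hB (x := q) (y := i) (z := p)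
            (Fin.lt_def.2 (by rw [hqv]; omega)) (Fin.lt_def.2 (by rw [hqv]; omega))
            (fun h => hpi (congrArg Fin.val h).symm) r1 r2
        · have hai' : a = i.val := by omega
          obtain ⟨w, hwv⟩ : ∃ w : Fin n, (w : ℕ) = n - 1 - a := ⟨⟨n - 1 - a, by omega⟩, rfl⟩
          obtain ⟨wa, hwav⟩ : ∃ wa : Fin n, (wa : ℕ) = a := ⟨⟨a, by omega⟩, rfl⟩
          have hTcard : (Finset.univ.filter (fun t : Fin n => w ≤ σ t)).card = a + 1 := by
            rw [count_big, hwv]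
            omega
          have hAcard : (Finset.univ.filter (fun t : Fin n => t < wa)).card = a := by
            rw [count_small, hwav]
          have hsub : insert i (insert p (Finset.univ.filter (fun t : Fin n => t < wa))) ⊆
              Finset.univ.filter (fun t : Fin n => w ≤ σ t) := by
            intro t ht
            rw [Finset.mem_insert, Finset.mem_insert] at ht
            rw [Finset.mem_filter]
            refine ⟨Finset.mem_univ _, Fin.le_def.2 ?_⟩
            rw [hwv]
            rcases ht with h | h | h
            · rw [h]; omega
            · rw [h, hσp]
            · rw [Finset.mem_filter] at h
              have h5 := lower_bound hA hB t
              have h6 := Fin.lt_def.1 h.2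
              rw [hwav] at h6
              omega
          have hiA : i ∉ insert p (Finset.univ.filter (fun t : Fin n => t < wa)) := by
            rw [Finset.mem_insert]
            rintro (h | h)
            · exact hpi (congrArg Fin.val h).symm
            · rw [Finset.mem_filter] at h
              have := Fin.lt_def.1 h.2
              rw [hwav] at this
              omega
          have hpA : p ∉ Finset.univ.filter (fun t : Fin n => t < wa) := by
            rw [Finset.mem_filter]
            rintro ⟨_, h⟩
            have := Fin.lt_def.1 h
            rw [hwav] at this
            omega
          have hcard : (insert i (insert p
              (Finset.univ.filter (fun t : Fin n => t < wa)))).card = a + 2 := by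
            rw [Finset.card_insert_of_notMem hiA, Finset.card_insert_of_notMem hpA, hAcard]
          have := Finset.card_le_card hsub
          have := Finset.card_insert_of_notMem hiA
          omega
  · by_cases hi2 : i.val + 2 = n
    · rw [show i.val = n - 2 by omega, sf_pen hn]
      exact hpen i (by omega)
    · have hie : i.val = n - 1 := by have := i.isLt; omega
      rw [hie, sf_last hn]
      have hale : zf c (n - 2) ≤ n - 2 := zf_le c (n - 2)
      set a := zf c (n - 2) with ha
      obtain ⟨p, hσp⟩ : ∃ p : Fin n, (σ p : ℕ) = n - 1 - a :=
        ⟨σ.symm ⟨n - 1 - a, by omega⟩, by rw [Equiv.apply_symm_apply]⟩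
      have hp_not_lt : ¬ ((p : ℕ) < a) := by
        intro hlt
        have ha1 : 1 ≤ a := by omega
        have hc1 : c (a - 1) = true := by
          have := c_pred_zf c (t := n - 2) (by omega)
          rwa [← ha] at this
        have hP1p := lower_bound hA hB p
        have hpe : (p : ℕ) = a - 1 := by omega
        have hcp : c (p : ℕ) = true := by rw [hpe]; exact hc1
        have hcontra := (recC_true_iff σ p (by omega)).1 hcp
        apply hcontra
        rw [hσp]
        omega
      have hp_not_mid : ¬ (a ≤ (p : ℕ) ∧ (p : ℕ) < n - 2) := by
        rintro ⟨h1, h2⟩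
        have hcf : c (p : ℕ) = false := c_eq_false_of c (by omega) h2
        have := hval_run p (by omega) hcf
        rw [hσp] at this
        omega
      have hp_not_pen : (p : ℕ) ≠ n - 2 := by
        intro h
        have := hpen p h
        omega
      have hpe : (p : ℕ) = n - 1 := by
        have := p.isLt
        omega
      rw [show i = p from Fin.ext (by omega)]
      exact hσp

lemma c_determined {n : ℕ} {c c' : ℕ → Bool} {t : ℕ} (h3 : t + 3 ≤ n)
    (h : sf n c t = sf n c' t) : c t = c' t := by
  cases hct : c t with
  | false =>
    cases hct' : c' t with
    | false => rfl
    | true =>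
      rw [sf_false h3 hct, sf_true h3 hct'] at h
      have := zf_le c' t
      omega
  | true =>
    cases hct' : c' t with
    | false =>
      rw [sf_true h3 hct, sf_false h3 hct'] at h
      have := zf_le c t
      omega
    | true => rfl

end CrsProof


theorem count_crossings_123_132_pos (n k : ℕ) (hn : 2 ≤ n) :
    (Finset.univ.filter (fun σ : Equiv.Perm (Fin n) =>
        Avoids σ p123 ∧ Avoids σ p132 ∧ (σ ⟨n - 2, by omega⟩ : ℕ) = 0 ∧ crs σ = k)).card =
      Nat.choose (n - 2) k := by
  classical
  have hL : n - 2 + 2 = n := by omega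
  have hcount := CrsProof.count_G (n - 2) k
  rw [hL] at hcount
  rw [← hcount]
  refine (Finset.card_bij (fun c _ => CrsProof.sigmaP n (CrsProof.extendB c) hn) ?_ ?_ ?_).symm
  · intro c hc
    rw [Finset.mem_filter] at hc ⊢
    obtain ⟨hav1, hav2⟩ := CrsProof.sigmaP_avoids (CrsProof.extendB c) hn
    exact ⟨Finset.mem_univ _, hav1, hav2, CrsProof.sigmaP_pen (CrsProof.extendB c) hn,
      by rw [CrsProof.crs_sigmaP (CrsProof.extendB c) hn]; exact hc.2⟩
  · intro c hc c' hc' heq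
    funext i
    have hi3 : (i : ℕ) + 3 ≤ n := by have := i.isLt; omega
    have hval := congrArg (fun (e : Equiv.Perm (Fin n)) =>
      ((e ⟨(i : ℕ), by omega⟩ : Fin n) : ℕ)) heq
    have hsf : CrsProof.sf n (CrsProof.extendB c) (i : ℕ) =
        CrsProof.sf n (CrsProof.extendB c') (i : ℕ) := hval
    have := CrsProof.c_determined hi3 hsf
    rwa [CrsProof.extendB_lt c i.isLt, CrsProof.extendB_lt c' i.isLt] at this
  · intro σ hσ
    rw [Finset.mem_filter] at hσ
    obtain ⟨_, hA, hB, h0, hcrs⟩ := hσ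
    refine ⟨fun t => CrsProof.recC σ (t : ℕ), ?_, ?_⟩
    · rw [Finset.mem_filter]
      refine ⟨Finset.mem_univ _, ?_⟩
      have hext : CrsProof.extendB (fun t : Fin (n - 2) => CrsProof.recC σ (t : ℕ)) =
          CrsProof.recC σ := by
        funext t
        by_cases ht : t < n - 2
        · rw [CrsProof.extendB_lt _ ht]
        · rw [CrsProof.extendB]
          rw [dif_neg ht]
          unfold CrsProof.recC
          rw [dif_neg (by omega)]
      rw [hext, ← CrsProof.crs_sigmaP (CrsProof.recC σ) hn]
      have hperm : σ = CrsProof.sigmaP n (CrsProof.recC σ) hn := by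
        apply Equiv.ext
        intro x
        apply Fin.ext
        exact CrsProof.sigma_eq_sf hn σ hA hB h0 x
      rw [← hperm]
      exact hcrs
    · have hext : CrsProof.extendB (fun t : Fin (n - 2) => CrsProof.recC σ (t : ℕ)) =
          CrsProof.recC σ := by
        funext t
        by_cases ht : t < n - 2
        · rw [CrsProof.extendB_lt _ ht]
        · rw [CrsProof.extendB]
          rw [dif_neg ht]
          unfold CrsProof.recC
          rw [dif_neg (by omega)]
      show CrsProof.sigmaP n
        (CrsProof.extendB (fun t : Fin (n - 2) => CrsProof.recC σ (t : ℕ))) hn = σ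
      rw [hext]
      symm
      apply Equiv.ext
      intro x
      apply Fin.ext
      exact CrsProof.sigma_eq_sf hn σ hA hB h0 x
end
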